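/- arXiv:1606.03563 — 4 statements merged into one kernel-verified Lean document; each statement's English description precedes it below -/
import Mathlib

section
/- For every n ≥ 3 and every m ∈ {1,…,n+1}, the assignment on generators q_m(a_{ijk}) = 1 if m ∈ {i,j,k}, and q_m(a_{ijk}) = a_{i'j'k'} otherwise (where each of i,j,k strictly greater than m is decreased by 1 and each index less than m is unchanged) sends every defining relator of G_{n+1}^3 to the identity of G_n^3, and hence extends to a group homomorphism q_m : G_{n+1}^3 → G_n^3. -/
namespace GnkBrunnian

/-! ## Index types for generators -/

/-- Validity of a pair index: `1 ≤ i < j ≤ n`. -/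
abbrev P2ok (n : ℕ) (p : ℕ × ℕ) : Prop := 1 ≤ p.1 ∧ p.1 < p.2 ∧ p.2 ≤ n

/-- Index type for the generators `a_{ij}` of `G_n^2` (and `b_{ij}` of `PB_n`). -/
abbrev PIdx (n : ℕ) := {p : ℕ × ℕ // P2ok n p}

/-- Validity of a triple index: `1 ≤ i < j < k ≤ n`. -/
abbrev T3ok (n : ℕ) (t : ℕ × ℕ × ℕ) : Prop :=
  1 ≤ t.1 ∧ t.1 < t.2.1 ∧ t.2.1 < t.2.2 ∧ t.2.2 ≤ n

/-- Index type for the generators `a_{ijk}` of `G_n^3`. -/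
abbrev TIdx (n : ℕ) := {t : ℕ × ℕ × ℕ // T3ok n t}

def sort2 (a b : ℕ) : ℕ × ℕ := (min a b, max a b)

def sort3 (a b c : ℕ) : ℕ × ℕ × ℕ :=
  (min a (min b c), a + b + c - min a (min b c) - max a (max b c), max a (max b c))

def pairSet {n : ℕ} (p : PIdx n) : Finset ℕ := {p.1.1, p.1.2}

def tripSet {n : ℕ} (t : TIdx n) : Finset ℕ := {t.1.1, t.1.2.1, t.1.2.2}

/-- Reindexing after deleting the strand `m` : indices above `m` are decreased by one. -/
def del (m x : ℕ) : ℕ := if m < x then x - 1 else x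

/-! ## The group `G_n^2` -/

/-- The free-group letter `a_{\{a,b\}}` (trivial if the index is out of range). -/
def fgen2 (n a b : ℕ) : FreeGroup (PIdx n) :=
  if h : P2ok n (sort2 a b) then FreeGroup.of ⟨sort2 a b, h⟩ else 1

/-- The defining relators of `G_n^2`. -/
def rels2 (n : ℕ) : Set (FreeGroup (PIdx n)) :=
  {r | ∃ a : PIdx n, r = .of a * .of a} ∪
  {r | ∃ i j k l : ℕ,
      1 ≤ i ∧ i ≤ n ∧ 1 ≤ j ∧ j ≤ n ∧ 1 ≤ k ∧ k ≤ n ∧ 1 ≤ l ∧ l ≤ n ∧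
      i ≠ j ∧ i ≠ k ∧ i ≠ l ∧ j ≠ k ∧ j ≠ l ∧ k ≠ l ∧
      r = fgen2 n i j * fgen2 n k l * (fgen2 n i j)⁻¹ * (fgen2 n k l)⁻¹} ∪
  {r | ∃ i j k : ℕ,
      1 ≤ i ∧ i ≤ n ∧ 1 ≤ j ∧ j ≤ n ∧ 1 ≤ k ∧ k ≤ n ∧ i ≠ j ∧ i ≠ k ∧ j ≠ k ∧
      r = fgen2 n i j * fgen2 n i k * fgen2 n j k *
          (fgen2 n j k * fgen2 n i k * fgen2 n i j)⁻¹}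

/-- The group `G_n^2`. -/
abbrev G2 (n : ℕ) := PresentedGroup (rels2 n)

/-- The generator `a_{\{a,b\}}` of `G_n^2` (trivial if the index is out of range). -/
def ggen2 (n a b : ℕ) : G2 n :=
  if h : P2ok n (sort2 a b) then PresentedGroup.of ⟨sort2 a b, h⟩ else 1

/-- The element of `G_n^2` represented by a word in the generators. -/
def toG2 {n : ℕ} (β : List (PIdx n)) : G2 n :=
  (β.map fun a => (PresentedGroup.of a : G2 n)).prod

/-! ## The group `G_n^3` -/

/-- The free-group letter `a_{\{a,b,c\}}` (trivial if the index is out of range). -/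
def fgen3 (n a b c : ℕ) : FreeGroup (TIdx n) :=
  if h : T3ok n (sort3 a b c) then FreeGroup.of ⟨sort3 a b c, h⟩ else 1

/-- The defining relators of `G_n^3`. -/
def rels3 (n : ℕ) : Set (FreeGroup (TIdx n)) :=
  {r | ∃ a : TIdx n, r = .of a * .of a} ∪
  {r | ∃ a b : TIdx n, (tripSet a ∩ tripSet b).card < 2 ∧
      r = .of a * .of b * (.of a)⁻¹ * (.of b)⁻¹} ∪
  {r | ∃ i j k l : ℕ,
      1 ≤ i ∧ i ≤ n ∧ 1 ≤ j ∧ j ≤ n ∧ 1 ≤ k ∧ k ≤ n ∧ 1 ≤ l ∧ l ≤ n ∧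
      i ≠ j ∧ i ≠ k ∧ i ≠ l ∧ j ≠ k ∧ j ≠ l ∧ k ≠ l ∧
      r = fgen3 n i j k * fgen3 n i j l * fgen3 n i k l * fgen3 n j k l *
          (fgen3 n j k l * fgen3 n i k l * fgen3 n i j l * fgen3 n i j k)⁻¹}

/-- The group `G_n^3`. -/
abbrev G3 (n : ℕ) := PresentedGroup (rels3 n)

/-- The generator `a_{\{a,b,c\}}` of `G_n^3` (trivial if the index is out of range). -/
def ggen3 (n a b c : ℕ) : G3 n :=
  if h : T3ok n (sort3 a b c) then PresentedGroup.of ⟨sort3 a b c, h⟩ else 1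

/-- The element of `G_n^3` represented by a word in the generators. -/
def toG3 {n : ℕ} (β : List (TIdx n)) : G3 n :=
  (β.map fun a => (PresentedGroup.of a : G3 n)).prod

/-! ## The pure braid group `PB_n` (standard Artin/Birman presentation) -/

/-- The defining relators of the pure braid group on `n` strands, in the standard
presentation on the generators `b_{ij} = A_{ij}`, `1 ≤ i < j ≤ n`. -/
def relsPB (n : ℕ) : Set (FreeGroup (PIdx n)) :=
  {x | ∃ r s i j : ℕ, P2ok n (r, s) ∧ P2ok n (i, j) ∧ (s < i ∨ (i < r ∧ s < j)) ∧
      x = (fgen2 n r s)⁻¹ * fgen2 n i j * fgen2 n r s * (fgen2 n i j)⁻¹} ∪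
  {x | ∃ r s j : ℕ, 1 ≤ r ∧ r < s ∧ s < j ∧ j ≤ n ∧
      x = (fgen2 n r s)⁻¹ * fgen2 n s j * fgen2 n r s *
          (fgen2 n r j * fgen2 n s j * (fgen2 n r j)⁻¹)⁻¹} ∪
  {x | ∃ r s j : ℕ, 1 ≤ r ∧ r < s ∧ s < j ∧ j ≤ n ∧
      x = (fgen2 n r s)⁻¹ * fgen2 n r j * fgen2 n r s *
          ((fgen2 n r j * fgen2 n s j) * fgen2 n r j * (fgen2 n r j * fgen2 n s j)⁻¹)⁻¹} ∪
  {x | ∃ r i s j : ℕ, 1 ≤ r ∧ r < i ∧ i < s ∧ s < j ∧ j ≤ n ∧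
      x = (fgen2 n r s)⁻¹ * fgen2 n i j * fgen2 n r s *
          ((fgen2 n r j * fgen2 n s j * (fgen2 n r j)⁻¹ * (fgen2 n s j)⁻¹) * fgen2 n i j *
           (fgen2 n r j * fgen2 n s j * (fgen2 n r j)⁻¹ * (fgen2 n s j)⁻¹)⁻¹)⁻¹}

/-- The pure braid group on `n` strands. -/
abbrev PB (n : ℕ) := PresentedGroup (relsPB n)

/-- The standard generator `b_{ij}` of `PB_n` (trivial if the index is out of range). -/
def pbgen (n a b : ℕ) : PB n :=
  if h : P2ok n (sort2 a b) then PresentedGroup.of ⟨sort2 a b, h⟩ else 1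

/-! ## The elements `c^n_{i,j}` and the homomorphism `φ_n` -/

/-- `c^n_{i,j} = (∏_{k=j+1}^{n} a_{ijk}) * (∏_{k=1, k∉{i,j}}^{j-1} a_{ijk}) ∈ G_n^3`. -/
def cElt (n i j : ℕ) : G3 n :=
  (((List.range' (j + 1) (n - j)).map fun k => ggen3 n i j k).prod) *
  (((List.range' 1 (j - 1)).map fun k => ggen3 n i j k).prod)

/-- The image of `b_{ij}` under `φ_n`:
`(c^n_{i,i+1})⁻¹ ⋯ (c^n_{i,j-1})⁻¹ (c^n_{i,j})² c^n_{i,j-1} ⋯ c^n_{i,i+1}`. -/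
def phiElt (n i j : ℕ) : G3 n :=
  (((List.range' (i + 1) (j - 1 - i)).map fun m => (cElt n i m)⁻¹).prod) *
  (cElt n i j) ^ 2 *
  (((List.range' (i + 1) (j - 1 - i)).reverse.map fun m => cElt n i m).prod)

/-- `q` is the strand-deletion homomorphism `q_m : G_n^3 → G_{n-1}^3`. -/
def IsShift3 (n m : ℕ) (q : G3 n →* G3 (n - 1)) : Prop :=
  ∀ i j k : ℕ, 1 ≤ i → i < j → j < k → k ≤ n →
    q (ggen3 n i j k) =
      if m = i ∨ m = j ∨ m = k then 1
      else ggen3 (n - 1) (del m i) (del m j) (del m k)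

/-- `p` is the strand-deletion homomorphism `p_m : PB_n → PB_{n-1}`. -/
def IsShiftPB (n m : ℕ) (p : PB n →* PB (n - 1)) : Prop :=
  ∀ i j : ℕ, 1 ≤ i → i < j → j ≤ n →
    p (pbgen n i j) =
      if m = i ∨ m = j then 1 else pbgen (n - 1) (del m i) (del m j)

/-- `φ` is the Manturov–Nikonov homomorphism `φ_n : PB_n → G_n^3`. -/
def IsPhi (n : ℕ) (φ : PB n →* G3 n) : Prop :=
  ∀ i j : ℕ, 1 ≤ i → i < j → j ≤ n → φ (pbgen n i j) = phiElt n i j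

/-! ## Words and good condition -/

def good2 {n : ℕ} (β : List (PIdx n)) : Prop := ∀ a : PIdx n, Even (β.count a)

def good3 {n : ℕ} (β : List (TIdx n)) : Prop := ∀ a : TIdx n, Even (β.count a)

/-! ## Free products of copies of `ℤ/2` -/

/-- The free product of copies of `ℤ/2ℤ` indexed by `ι`. -/
abbrev FP2 (ι : Type) := PresentedGroup {r : FreeGroup ι | ∃ a : ι, r = .of a * .of a}

/-- Indices `l ∈ {1,…,n} \ {i,j,k}`. -/
abbrev SIdx3 (n i j k : ℕ) := {l : ℕ // (1 ≤ l ∧ l ≤ n) ∧ l ≠ i ∧ l ≠ j ∧ l ≠ k}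

/-- The group `F_n^3` (for the fixed triple `(i,j,k)`). -/
abbrev F3 (n i j k : ℕ) := FP2 (SIdx3 n i j k → ZMod 2 × ZMod 2)

/-- Indices `k ∈ {1,…,n} \ {i,j}`. -/
abbrev SIdx2 (n i j : ℕ) := {l : ℕ // (1 ≤ l ∧ l ≤ n) ∧ l ≠ i ∧ l ≠ j}

/-- The group `F_n^2` (for the fixed pair `(i,j)`). -/
abbrev F2 (n i j : ℕ) := FP2 (SIdx2 n i j → ZMod 2)

/-! ## The MN-invariants `w_{(i,j)}` and `w_{(i,j,k)}` -/

/-- The number of occurrences of the generator `a_{\{a,b\}}` in a word over `G_n^2`. -/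
def cnt2 {n : ℕ} (β : List (PIdx n)) (a b : ℕ) : ℕ :=
  (β.filter fun x => decide (pairSet x = ({a, b} : Finset ℕ))).length

/-- The number of occurrences of the generator `a_{\{a,b,c\}}` in a word over `G_n^3`. -/
def cnt3 {n : ℕ} (β : List (TIdx n)) (a b c : ℕ) : ℕ :=
  (β.filter fun x => decide (tripSet x = ({a, b, c} : Finset ℕ))).length

/-- `i_c` for an occurrence of `a_{ij}` with prefix `pre`: `i_c(k) = N_{ik} + N_{jk} (mod 2)`. -/
def iC2 {n : ℕ} (i j : ℕ) (pre : List (PIdx n)) : SIdx2 n i j → ZMod 2 :=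
  fun k => ((cnt2 pre i k.1 + cnt2 pre j k.1 : ℕ) : ZMod 2)

/-- The MN-invariant `w_{(i,j)}` of a word over `G_n^2`. -/
def w2 {n : ℕ} (i j : ℕ) (β : List (PIdx n)) : F2 n i j :=
  (((β.zipIdx.map Prod.swap).filter fun x => decide (pairSet x.2 = ({i, j} : Finset ℕ))).map
    fun x => (PresentedGroup.of (iC2 i j (β.take x.1)) : F2 n i j)).prod

/-- `i_c` for an occurrence of `a_{ijk}` with prefix `pre`:
`i_c(l) = (N_{jkl} + N_{ijl}, N_{ikl} + N_{ijl}) (mod 2)`. -/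
def iC3 {n : ℕ} (i j k : ℕ) (pre : List (TIdx n)) : SIdx3 n i j k → ZMod 2 × ZMod 2 :=
  fun l => (((cnt3 pre j k l.1 + cnt3 pre i j l.1 : ℕ) : ZMod 2),
            ((cnt3 pre i k l.1 + cnt3 pre i j l.1 : ℕ) : ZMod 2))

/-- The MN-invariant `w_{(i,j,k)}` of a word over `G_n^3`. -/
def w3 {n : ℕ} (i j k : ℕ) (β : List (TIdx n)) : F3 n i j k :=
  (((β.zipIdx.map Prod.swap).filter fun x => decide (tripSet x.2 = ({i, j, k} : Finset ℕ))).map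
    fun x => (PresentedGroup.of (iC3 i j k (β.take x.1)) : F3 n i j k)).prod

/-! ## Explicit words for `c^n_{i,j}` and `φ_n(b_{ij})` -/

def tripMkS (n a b c : ℕ) : Option (TIdx n) :=
  if h : T3ok n (sort3 a b c) then some ⟨sort3 a b c, h⟩ else none

def pairMkS (n a b : ℕ) : Option (PIdx n) :=
  if h : P2ok n (sort2 a b) then some ⟨sort2 a b, h⟩ else none

/-- The defining word of `c^n_{i,j}`. -/
def cWord (n i j : ℕ) : List (TIdx n) :=
  ((List.range' (j + 1) (n - j)).filterMap fun k => tripMkS n i j k) ++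
  ((List.range' 1 (j - 1)).filterMap fun k => tripMkS n i j k)

/-- The defining word of `φ_n(b_{ij})`, with the inverses of the `c`-words expanded using
`a⁻¹ = a` for generators (i.e. by reversing the words). -/
def phiWord (n i j : ℕ) : List (TIdx n) :=
  (((List.range' (i + 1) (j - 1 - i)).map fun m => (cWord n i m).reverse).flatten) ++
  cWord n i j ++ cWord n i j ++
  (((List.range' (i + 1) (j - 1 - i)).reverse.map fun m => cWord n i m).flatten)

/-! ## The group `G_{n,p}^2` (parity) -/

/-- Index type for the generators `a_{ij}^ε` of `G_{n,p}^2`. -/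
abbrev PPIdx (n : ℕ) := PIdx n × ZMod 2

def fgenP2 (n a b : ℕ) (e : ZMod 2) : FreeGroup (PPIdx n) :=
  if h : P2ok n (sort2 a b) then FreeGroup.of (⟨sort2 a b, h⟩, e) else 1

/-- The defining relators of `G_{n,p}^2`. -/
def relsP2 (n : ℕ) : Set (FreeGroup (PPIdx n)) :=
  {r | ∃ a : PPIdx n, r = .of a * .of a} ∪
  {r | ∃ (i j k l : ℕ) (e e' : ZMod 2),
      1 ≤ i ∧ i ≤ n ∧ 1 ≤ j ∧ j ≤ n ∧ 1 ≤ k ∧ k ≤ n ∧ 1 ≤ l ∧ l ≤ n ∧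
      i ≠ j ∧ i ≠ k ∧ i ≠ l ∧ j ≠ k ∧ j ≠ l ∧ k ≠ l ∧
      r = fgenP2 n i j e * fgenP2 n k l e' * (fgenP2 n i j e)⁻¹ * (fgenP2 n k l e')⁻¹} ∪
  {r | ∃ (i j k : ℕ) (e1 e2 e3 : ZMod 2),
      1 ≤ i ∧ i < j ∧ j < k ∧ k ≤ n ∧ e1 + e2 + e3 = 0 ∧
      r = fgenP2 n i j e1 * fgenP2 n i k e2 * fgenP2 n j k e3 *
          (fgenP2 n j k e3 * fgenP2 n i k e2 * fgenP2 n i j e1)⁻¹}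

/-- The group `G_{n,p}^2`. -/
abbrev GP2 (n : ℕ) := PresentedGroup (relsP2 n)

/-- The element of `G_{n,p}^2` represented by a word in the generators. -/
def toGP2 {n : ℕ} (β : List (PPIdx n)) : GP2 n :=
  (β.map fun a => (PresentedGroup.of a : GP2 n)).prod

/-! ## The parity invariant `w^p_{ij}` on `G_{n,p}^2` -/

/-- The number of occurrences of `a_{\{a,b\}}^e` in a word over `G_{n,p}^2`. -/
def cntP2 {n : ℕ} (β : List (PPIdx n)) (a b : ℕ) (e : ZMod 2) : ℕ :=
  (β.filter fun x => decide (pairSet x.1 = ({a, b} : Finset ℕ) ∧ x.2 = e)).length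

/-- `i^p_c` for an occurrence of `a_{ij}^e` with prefix `pre`. -/
def iCP2 {n : ℕ} (i j : ℕ) (e : ZMod 2) (pre : List (PPIdx n)) : SIdx2 n i j → ZMod 2 :=
  fun k =>
    if e = 0 then ((cntP2 pre i k.1 0 + cntP2 pre j k.1 0 : ℕ) : ZMod 2)
    else ((cntP2 pre i k.1 0 + cntP2 pre j k.1 1 : ℕ) : ZMod 2)

/-- The invariant `w^p_{ij}` of a word over `G_{n,p}^2`. -/
def wP2 {n : ℕ} (i j : ℕ) (β : List (PPIdx n)) : F2 n i j :=
  (((β.zipIdx.map Prod.swap).filter fun x => decide (pairSet x.2.1 = ({i, j} : Finset ℕ))).map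
    fun x => (PresentedGroup.of (iCP2 i j x.2.2 (β.take x.1)) : F2 n i j)).prod

/-! ## The map `ψ_l : G_{n+1}^2 → G_{n,p}^2` -/

/-- The word over `G_{n,p}^2` obtained from a word over `G_{n+1}^2` by deleting the strand `l`
and recording parities. -/
def psiWord (n l : ℕ) (β : List (PIdx (n + 1))) : List (PPIdx n) :=
  (β.zipIdx.map Prod.swap).filterMap fun x =>
    if l = x.2.1.1 ∨ l = x.2.1.2 then none
    else (pairMkS n (del l x.2.1.1) (del l x.2.1.2)).map fun p =>
      (p, ((cnt2 (β.take x.1) x.2.1.1 l + cnt2 (β.take x.1) x.2.1.2 l : ℕ) : ZMod 2))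

/-! ## The group `G_{n,p}^3` (parity) -/

/-- Index type for the generators `a_{ijk}^ε` of `G_{n,p}^3`. -/
abbrev TPIdx (n : ℕ) := TIdx n × ZMod 2

def fgenP3 (n a b c : ℕ) (e : ZMod 2) : FreeGroup (TPIdx n) :=
  if h : T3ok n (sort3 a b c) then FreeGroup.of (⟨sort3 a b c, h⟩, e) else 1

/-- The defining relators of `G_{n,p}^3`. -/
def relsP3 (n : ℕ) : Set (FreeGroup (TPIdx n)) :=
  {r | ∃ a : TPIdx n, r = .of a * .of a} ∪
  {r | ∃ a b : TPIdx n, (tripSet a.1 ∩ tripSet b.1).card < 2 ∧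
      r = (.of a * .of b) ^ 2} ∪
  {r | ∃ (i j k l : ℕ) (ei ej ek el : ZMod 2),
      1 ≤ i ∧ i ≤ n ∧ 1 ≤ j ∧ j ≤ n ∧ 1 ≤ k ∧ k ≤ n ∧ 1 ≤ l ∧ l ≤ n ∧
      i ≠ j ∧ i ≠ k ∧ i ≠ l ∧ j ≠ k ∧ j ≠ l ∧ k ≠ l ∧
      (if max (max i j) (max k l) = i then ej + ek + el
       else if max (max i j) (max k l) = j then ei + ek + el
       else if max (max i j) (max k l) = k then ei + ej + el
       else ei + ej + ek) = 0 ∧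
      r = (fgenP3 n i j k el * fgenP3 n i j l ek * fgenP3 n i k l ej * fgenP3 n j k l ei) ^ 2}

/-- The group `G_{n,p}^3`. -/
abbrev GP3 (n : ℕ) := PresentedGroup (relsP3 n)

/-- The element of `G_{n,p}^3` represented by a word in the generators. -/
def toGP3 {n : ℕ} (β : List (TPIdx n)) : GP3 n :=
  (β.map fun a => (PresentedGroup.of a : GP3 n)).prod

/-! ## The map `f : G_{n+1}^3 → G_{n,p}^3` -/

/-- The word over `G_{n,p}^3` obtained from a word over `G_{n+1}^3` by deleting the letters
containing the index `n+1` and recording parities. -/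
def fWord (n : ℕ) (β : List (TIdx (n + 1))) : List (TPIdx n) :=
  (β.zipIdx.map Prod.swap).filterMap fun x =>
    if x.2.1.2.2 = n + 1 then none
    else (tripMkS n x.2.1.1 x.2.1.2.1 x.2.1.2.2).map fun t =>
      (t, ((cnt3 (β.take x.1) x.2.1.2.1 x.2.1.2.2 (n + 1) +
            cnt3 (β.take x.1) x.2.1.1 x.2.1.2.2 (n + 1) : ℕ) : ZMod 2))

/-! ## The parity invariant `w^p_{ijk}` on `G_{n,p}^3` -/

/-- The group `F_n^3` with values in `ℤ/2` (for the parity invariant). -/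
abbrev F3p (n i j k : ℕ) := FP2 (SIdx3 n i j k → ZMod 2)

/-- The number of occurrences of `a_{\{a,b,c\}}^e` in a word over `G_{n,p}^3`. -/
def cntP3 {n : ℕ} (β : List (TPIdx n)) (a b c : ℕ) (e : ZMod 2) : ℕ :=
  (β.filter fun x => decide (tripSet x.1 = ({a, b, c} : Finset ℕ) ∧ x.2 = e)).length

/-- `i^p_c` for an occurrence of `a_{ijk}^e` with prefix `pre` (here `k > i, j`). -/
def iCP3 {n : ℕ} (i j k : ℕ) (e : ZMod 2) (pre : List (TPIdx n)) : SIdx3 n i j k → ZMod 2 :=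
  fun l =>
    if e = 0 then
      (if k < l.1 then
        ((cntP3 pre i k l.1 0 + cntP3 pre j k l.1 0 + cntP3 pre i j l.1 1 : ℕ) : ZMod 2)
      else ((cntP3 pre i k l.1 0 + cntP3 pre j k l.1 0 : ℕ) : ZMod 2))
    else
      (if k < l.1 then
        ((cntP3 pre i k l.1 0 + cntP3 pre j k l.1 1 + cntP3 pre i j l.1 0 : ℕ) : ZMod 2)
      else ((cntP3 pre i k l.1 0 + cntP3 pre j k l.1 1 : ℕ) : ZMod 2))

/-- The invariant `w^p_{ijk}` of a word over `G_{n,p}^3`. -/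
def wP3 {n : ℕ} (i j k : ℕ) (β : List (TPIdx n)) : F3p n i j k :=
  (((β.zipIdx.map Prod.swap).filter fun x => decide (tripSet x.2.1 = ({i, j, k} : Finset ℕ))).map
    fun x => (PresentedGroup.of (iCP3 i j k x.2.2 (β.take x.1)) : F3p n i j k)).prod

/-- The prescribed image of the generator `a_{ijk}` of `G_{n+1}^3` under `q_m`. -/
def qfun3 (n m : ℕ) (a : TIdx (n + 1)) : G3 n :=
  if m = a.1.1 ∨ m = a.1.2.1 ∨ m = a.1.2.2 then 1
  else ggen3 n (del m a.1.1) (del m a.1.2.1) (del m a.1.2.2)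

/-! ### Auxiliary lemmas for `statement_0` -/

lemma del_inj' {m a b : ℕ} (h : del m a = del m b) (ha : a ≠ m) (hb : b ≠ m) : a = b := by
  unfold del at h; split_ifs at h <;> omega

lemma del_bd {n m x : ℕ} (hm1 : 1 ≤ m) (hm2 : m ≤ n + 1) (hx1 : 1 ≤ x) (hx2 : x ≤ n + 1)
    (hxm : x ≠ m) : 1 ≤ del m x ∧ del m x ≤ n := by
  unfold del; split_ifs <;> omega

lemma mk_rel3 {n : ℕ} {r : FreeGroup (TIdx n)} (hr : r ∈ rels3 n) :
    (QuotientGroup.mk r : G3 n) = 1 :=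
  (QuotientGroup.eq_one_iff r).mpr (Subgroup.subset_normalClosure hr)

lemma mk_fgen3 (n a b c : ℕ) :
    (QuotientGroup.mk (fgen3 n a b c) : G3 n) = ggen3 n a b c := by
  unfold fgen3 ggen3; split_ifs <;> rfl

lemma of_sq3 {n : ℕ} (a : TIdx n) :
    (PresentedGroup.of a : G3 n) * PresentedGroup.of a = 1 := by
  have := mk_rel3 (n := n) (Or.inl (Or.inl ⟨a, rfl⟩))
  simp only [QuotientGroup.mk_mul] at this
  exact this

lemma ggen3_sq (n a b c : ℕ) : ggen3 n a b c * ggen3 n a b c = 1 := by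
  unfold ggen3; split_ifs
  · exact of_sq3 _
  · simp

lemma qfun3_sq (n m : ℕ) (a : TIdx (n + 1)) : qfun3 n m a * qfun3 n m a = 1 := by
  unfold qfun3; split_ifs
  · simp
  · exact ggen3_sq _ _ _ _

lemma comm_rel3 {n : ℕ} (a b : TIdx n) (h : (tripSet a ∩ tripSet b).card < 2) :
    (PresentedGroup.of a : G3 n) * PresentedGroup.of b =
      PresentedGroup.of b * PresentedGroup.of a := by
  have := mk_rel3 (n := n) (Or.inl (Or.inr ⟨a, b, h, rfl⟩))
  simp only [QuotientGroup.mk_mul, QuotientGroup.mk_inv] at this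
  have h2 : ((PresentedGroup.of a : G3 n) * PresentedGroup.of b) *
      ((PresentedGroup.of a : G3 n)⁻¹ * (PresentedGroup.of b)⁻¹) = 1 := by
    rw [← mul_assoc]; exact this
  have := mul_eq_one_iff_eq_inv.mp h2
  rw [this]; group

lemma tet_rel3 {n : ℕ} {i j k l : ℕ}
    (hi1 : 1 ≤ i) (hi2 : i ≤ n) (hj1 : 1 ≤ j) (hj2 : j ≤ n)
    (hk1 : 1 ≤ k) (hk2 : k ≤ n) (hl1 : 1 ≤ l) (hl2 : l ≤ n)
    (hij : i ≠ j) (hik : i ≠ k) (hil : i ≠ l) (hjk : j ≠ k) (hjl : j ≠ l) (hkl : k ≠ l) :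
    ggen3 n i j k * ggen3 n i j l * ggen3 n i k l * ggen3 n j k l =
      ggen3 n j k l * ggen3 n i k l * ggen3 n i j l * ggen3 n i j k := by
  have := mk_rel3 (n := n) (Or.inr ⟨i, j, k, l, hi1, hi2, hj1, hj2, hk1, hk2, hl1, hl2,
    hij, hik, hil, hjk, hjl, hkl, rfl⟩)
  simp only [QuotientGroup.mk_mul, QuotientGroup.mk_inv, mk_fgen3] at this
  exact mul_inv_eq_one.mp this

lemma fgen3_congr {n a b c a' b' c' : ℕ} (h : sort3 a b c = sort3 a' b' c') :
    fgen3 n a b c = fgen3 n a' b' c' := by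
  simp only [fgen3, h]

lemma ggen3_congr {n a b c a' b' c' : ℕ} (h : sort3 a b c = sort3 a' b' c') :
    ggen3 n a b c = ggen3 n a' b' c' := by
  simp only [ggen3, h]

lemma lift_fgen3_sorted (n m : ℕ) {i j k : ℕ}
    (hi1 : 1 ≤ i) (hij : i < j) (hjk : j < k) (hk2 : k ≤ n + 1) :
    FreeGroup.lift (qfun3 n m) (fgen3 (n + 1) i j k) =
      if m = i ∨ m = j ∨ m = k then 1
      else ggen3 n (del m i) (del m j) (del m k) := by
  have hs : sort3 i j k = (i, j, k) := by simp only [sort3, Prod.mk.injEq]; omega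
  have hok : T3ok (n + 1) (sort3 i j k) := by rw [hs]; exact ⟨hi1, hij, hjk, hk2⟩
  rw [fgen3, dif_pos hok, FreeGroup.lift_apply_of]
  have he : (⟨sort3 i j k, hok⟩ : TIdx (n + 1)) = ⟨(i, j, k), hs ▸ hok⟩ := Subtype.ext hs
  rw [he]
  rfl

lemma lift_fgen3_of_perm (n m : ℕ) {a b c a' b' c' : ℕ}
    (hs : sort3 a b c = sort3 a' b' c')
    (hc : (m = a ∨ m = b ∨ m = c) ↔ (m = a' ∨ m = b' ∨ m = c'))
    (hd : sort3 (del m a) (del m b) (del m c) = sort3 (del m a') (del m b') (del m c'))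
    (h : FreeGroup.lift (qfun3 n m) (fgen3 (n + 1) a' b' c') =
      if m = a' ∨ m = b' ∨ m = c' then 1 else ggen3 n (del m a') (del m b') (del m c')) :
    FreeGroup.lift (qfun3 n m) (fgen3 (n + 1) a b c) =
      if m = a ∨ m = b ∨ m = c then 1 else ggen3 n (del m a) (del m b) (del m c) := by
  rw [fgen3_congr hs, h, if_congr hc.symm rfl (ggen3_congr hd).symm]

lemma lift_fgen3 (n m : ℕ) {i j k : ℕ}
    (hi1 : 1 ≤ i) (hi2 : i ≤ n + 1) (hj1 : 1 ≤ j) (hj2 : j ≤ n + 1)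
    (hk1 : 1 ≤ k) (hk2 : k ≤ n + 1) (hij : i ≠ j) (hik : i ≠ k) (hjk : j ≠ k) :
    FreeGroup.lift (qfun3 n m) (fgen3 (n + 1) i j k) =
      if m = i ∨ m = j ∨ m = k then 1
      else ggen3 n (del m i) (del m j) (del m k) := by
  have h6 : (i < j ∧ j < k) ∨ (i < k ∧ k < j) ∨ (j < i ∧ i < k) ∨
      (j < k ∧ k < i) ∨ (k < i ∧ i < j) ∨ (k < j ∧ j < i) := by omega
  rcases h6 with ⟨h, h'⟩ | ⟨h, h'⟩ | ⟨h, h'⟩ | ⟨h, h'⟩ | ⟨h, h'⟩ | ⟨h, h'⟩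
  · exact lift_fgen3_sorted n m hi1 h h' hk2
  · exact lift_fgen3_of_perm n m (by simp only [sort3, Prod.mk.injEq]; omega) (by tauto)
      (by simp only [sort3, Prod.mk.injEq]; omega) (lift_fgen3_sorted n m hi1 h h' hj2)
  · exact lift_fgen3_of_perm n m (by simp only [sort3, Prod.mk.injEq]; omega) (by tauto)
      (by simp only [sort3, Prod.mk.injEq]; omega) (lift_fgen3_sorted n m hj1 h h' hk2)
  · exact lift_fgen3_of_perm n m (by simp only [sort3, Prod.mk.injEq]; omega) (by tauto)
      (by simp only [sort3, Prod.mk.injEq]; omega) (lift_fgen3_sorted n m hj1 h h' hi2)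
  · exact lift_fgen3_of_perm n m (by simp only [sort3, Prod.mk.injEq]; omega) (by tauto)
      (by simp only [sort3, Prod.mk.injEq]; omega) (lift_fgen3_sorted n m hk1 h h' hj2)
  · exact lift_fgen3_of_perm n m (by simp only [sort3, Prod.mk.injEq]; omega) (by tauto)
      (by simp only [sort3, Prod.mk.injEq]; omega) (lift_fgen3_sorted n m hk1 h h' hi2)

lemma delT_ok (n m : ℕ) (hm1 : 1 ≤ m) (hm2 : m ≤ n + 1) (a : TIdx (n + 1))
    (h : ¬(m = a.1.1 ∨ m = a.1.2.1 ∨ m = a.1.2.2)) :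
    T3ok n (del m a.1.1, del m a.1.2.1, del m a.1.2.2) := by
  obtain ⟨h1, h2, h3, h4⟩ := a.2
  push_neg at h
  refine show 1 ≤ del m a.1.1 ∧ del m a.1.1 < del m a.1.2.1 ∧
      del m a.1.2.1 < del m a.1.2.2 ∧ del m a.1.2.2 ≤ n from ?_
  unfold del
  split_ifs <;> omega

lemma qfun3_eq_of (n m : ℕ) (a : TIdx (n + 1))
    (h : ¬(m = a.1.1 ∨ m = a.1.2.1 ∨ m = a.1.2.2))
    (hok : T3ok n (del m a.1.1, del m a.1.2.1, del m a.1.2.2)) :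
    qfun3 n m a = PresentedGroup.of ⟨(del m a.1.1, del m a.1.2.1, del m a.1.2.2), hok⟩ := by
  rw [qfun3, if_neg h]
  have hs : sort3 (del m a.1.1) (del m a.1.2.1) (del m a.1.2.2) =
      (del m a.1.1, del m a.1.2.1, del m a.1.2.2) := by
    have hh : 1 ≤ del m a.1.1 ∧ del m a.1.1 < del m a.1.2.1 ∧
        del m a.1.2.1 < del m a.1.2.2 ∧ del m a.1.2.2 ≤ n := hok
    simp only [sort3, Prod.mk.injEq]; omega
  rw [ggen3]
  rw [dif_pos (show T3ok n (sort3 (del m a.1.1) (del m a.1.2.1) (del m a.1.2.2)) from hs ▸ hok)]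
  exact congrArg _ (Subtype.ext hs)

lemma card_del (n m : ℕ) (a b : TIdx (n + 1))
    (ha : ¬(m = a.1.1 ∨ m = a.1.2.1 ∨ m = a.1.2.2))
    (hb : ¬(m = b.1.1 ∨ m = b.1.2.1 ∨ m = b.1.2.2))
    (hoka : T3ok n (del m a.1.1, del m a.1.2.1, del m a.1.2.2))
    (hokb : T3ok n (del m b.1.1, del m b.1.2.1, del m b.1.2.2))
    (h : (tripSet a ∩ tripSet b).card < 2) :
    (tripSet (⟨_, hoka⟩ : TIdx n) ∩ tripSet (⟨_, hokb⟩ : TIdx n)).card < 2 := by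
  push_neg at ha hb
  obtain ⟨ha1, ha2, ha3⟩ := ha
  obtain ⟨hb1, hb2, hb3⟩ := hb
  have ta : tripSet (⟨_, hoka⟩ : TIdx n) =
      {del m a.1.1, del m a.1.2.1, del m a.1.2.2} := rfl
  have tb : tripSet (⟨_, hokb⟩ : TIdx n) =
      {del m b.1.1, del m b.1.2.1, del m b.1.2.2} := rfl
  rw [ta, tb]
  have hsub : ({del m a.1.1, del m a.1.2.1, del m a.1.2.2} : Finset ℕ) ∩
      {del m b.1.1, del m b.1.2.1, del m b.1.2.2} ⊆
      Finset.image (del m) (tripSet a ∩ tripSet b) := by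
    intro x hx
    simp only [Finset.mem_inter, Finset.mem_insert, Finset.mem_singleton] at hx
    rw [Finset.mem_image]
    obtain ⟨hxa, hxb⟩ := hx
    rcases hxa with h1 | h1 | h1 <;> rcases hxb with h2 | h2 | h2 <;>
      (rw [h1] at h2;
       refine ⟨_, Finset.mem_inter.mpr ⟨?_, ?_⟩, h1.symm⟩ <;>
       (have he := del_inj' h2 (by omega) (by omega);
        simp only [tripSet, Finset.mem_insert, Finset.mem_singleton];
        tauto))
  calc (({del m a.1.1, del m a.1.2.1, del m a.1.2.2} : Finset ℕ) ∩
        {del m b.1.1, del m b.1.2.1, del m b.1.2.2}).card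
      ≤ (Finset.image (del m) (tripSet a ∩ tripSet b)).card := Finset.card_le_card hsub
    _ ≤ (tripSet a ∩ tripSet b).card := Finset.card_image_le
    _ < 2 := h

theorem statement_0 (n m : ℕ) (hn : 3 ≤ n) (hm1 : 1 ≤ m) (hm2 : m ≤ n + 1) :
    (∀ r ∈ rels3 (n + 1), FreeGroup.lift (qfun3 n m) r = 1) ∧
    (∃ q : G3 (n + 1) →* G3 n, ∀ a : TIdx (n + 1),
        q (PresentedGroup.of a) = qfun3 n m a) := by
  have key : ∀ r ∈ rels3 (n + 1), FreeGroup.lift (qfun3 n m) r = 1 := by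
    rintro r ((⟨a, rfl⟩ | ⟨a, b, hab, rfl⟩) |
      ⟨i, j, k, l, hi1, hi2, hj1, hj2, hk1, hk2, hl1, hl2,
        hij, hik, hil, hjk, hjl, hkl, rfl⟩)
    · simp only [map_mul, FreeGroup.lift_apply_of]
      exact qfun3_sq n m a
    · simp only [map_mul, map_inv, FreeGroup.lift_apply_of]
      have hcomm : qfun3 n m a * qfun3 n m b = qfun3 n m b * qfun3 n m a := by
        by_cases ha : m = a.1.1 ∨ m = a.1.2.1 ∨ m = a.1.2.2
        · have h1 : qfun3 n m a = 1 := if_pos ha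
          rw [h1, one_mul, mul_one]
        by_cases hb : m = b.1.1 ∨ m = b.1.2.1 ∨ m = b.1.2.2
        · have h1 : qfun3 n m b = 1 := if_pos hb
          rw [h1, one_mul, mul_one]
        rw [qfun3_eq_of n m a ha (delT_ok n m hm1 hm2 a ha),
            qfun3_eq_of n m b hb (delT_ok n m hm1 hm2 b hb)]
        exact comm_rel3 _ _ (card_del n m a b ha hb _ _ hab)
      rw [hcomm]; group
    · simp only [map_mul, map_inv]
      rw [lift_fgen3 n m hi1 hi2 hj1 hj2 hk1 hk2 hij hik hjk,
          lift_fgen3 n m hi1 hi2 hj1 hj2 hl1 hl2 hij hil hjl,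
          lift_fgen3 n m hi1 hi2 hk1 hk2 hl1 hl2 hik hil hkl,
          lift_fgen3 n m hj1 hj2 hk1 hk2 hl1 hl2 hjk hjl hkl,
          mul_inv_eq_one]
      by_cases hmi : m = i
      · rw [if_pos (show m = i ∨ m = j ∨ m = k from Or.inl hmi),
            if_pos (show m = i ∨ m = j ∨ m = l from Or.inl hmi),
            if_pos (show m = i ∨ m = k ∨ m = l from Or.inl hmi)]
        simp
      by_cases hmj : m = j
      · rw [if_pos (show m = i ∨ m = j ∨ m = k from Or.inr (Or.inl hmj)),
            if_pos (show m = i ∨ m = j ∨ m = l from Or.inr (Or.inl hmj)),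
            if_pos (show m = j ∨ m = k ∨ m = l from Or.inl hmj)]
        simp
      by_cases hmk : m = k
      · rw [if_pos (show m = i ∨ m = j ∨ m = k from Or.inr (Or.inr hmk)),
            if_pos (show m = i ∨ m = k ∨ m = l from Or.inr (Or.inl hmk)),
            if_pos (show m = j ∨ m = k ∨ m = l from Or.inr (Or.inl hmk))]
        simp
      by_cases hml : m = l
      · rw [if_pos (show m = i ∨ m = j ∨ m = l from Or.inr (Or.inr hml)),
            if_pos (show m = i ∨ m = k ∨ m = l from Or.inr (Or.inr hml)),
            if_pos (show m = j ∨ m = k ∨ m = l from Or.inr (Or.inr hml))]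
        simp
      rw [if_neg (by tauto), if_neg (by tauto), if_neg (by tauto), if_neg (by tauto)]
      have bi := del_bd hm1 hm2 hi1 hi2 (fun h => hmi h.symm)
      have bj := del_bd hm1 hm2 hj1 hj2 (fun h => hmj h.symm)
      have bk := del_bd hm1 hm2 hk1 hk2 (fun h => hmk h.symm)
      have bl := del_bd hm1 hm2 hl1 hl2 (fun h => hml h.symm)
      exact tet_rel3 bi.1 bi.2 bj.1 bj.2 bk.1 bk.2 bl.1 bl.2
        (fun h => hij (del_inj' h (fun h => hmi h.symm) (fun h => hmj h.symm)))
        (fun h => hik (del_inj' h (fun h => hmi h.symm) (fun h => hmk h.symm)))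
        (fun h => hil (del_inj' h (fun h => hmi h.symm) (fun h => hml h.symm)))
        (fun h => hjk (del_inj' h (fun h => hmj h.symm) (fun h => hmk h.symm)))
        (fun h => hjl (del_inj' h (fun h => hmj h.symm) (fun h => hml h.symm)))
        (fun h => hkl (del_inj' h (fun h => hmk h.symm) (fun h => hml h.symm)))
  exact ⟨key, ⟨PresentedGroup.toGroup key, fun a => PresentedGroup.toGroup.of key⟩⟩

end GnkBrunnian
end

section
/- Let n ≥ 4, 1 ≤ m ≤ n, and 1 ≤ i < j ≤ n. Then q_m(c^n_{i,j}) = 1 if m ∈ {i,j}; q_m(c^n_{i,j}) = c^{n-1}_{i,j} if i,j < m; q_m(c^n_{i,j}) = c^{n-1}_{i,(j-1)} if i < m < j; and q_m(c^n_{i,j}) = c^{n-1}_{(i-1),(j-1)} if m < i < j. -/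
namespace GnkBrunnian

/-! ### Auxiliary lemmas for statement_2 -/

lemma sort3_rot (a b c : ℕ) : sort3 a b c = sort3 c a b := by
  simp only [sort3, Prod.mk.injEq]; omega

lemma sort3_swap (a b c : ℕ) : sort3 a b c = sort3 a c b := by
  simp only [sort3, Prod.mk.injEq]; omega

lemma ggen3_rot (n a b c : ℕ) : ggen3 n a b c = ggen3 n c a b := by
  unfold ggen3; rw [sort3_rot]

lemma ggen3_swap (n a b c : ℕ) : ggen3 n a b c = ggen3 n a c b := by
  unfold ggen3; rw [sort3_swap]

lemma ggen3_self (n i j : ℕ) (hij : i < j) : ggen3 n i j i = 1 := by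
  unfold ggen3
  rw [dif_neg]
  rintro ⟨h1, h2, h3, h4⟩
  simp only [sort3] at h2 h3
  omega

lemma del_eq_self {m x : ℕ} (h : x ≤ m) : del m x = x := by
  unfold del; rw [if_neg (by omega)]

lemma del_eq_pred {m x : ℕ} (h : m < x) : del m x = x - 1 := by
  unfold del; rw [if_pos h]

lemma qgg {n m : ℕ} (q : G3 n →* G3 (n - 1)) (hq : IsShift3 n m q)
    (i j k : ℕ) (h1 : 1 ≤ i) (hij : i < j) (hjn : j ≤ n) (hk1 : 1 ≤ k) (hkn : k ≤ n)
    (hki : k ≠ i) (hkj : k ≠ j) :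
    q (ggen3 n i j k) =
      if m = i ∨ m = j ∨ m = k then 1
      else ggen3 (n - 1) (del m i) (del m j) (del m k) := by
  by_cases hC : m = i ∨ m = j ∨ m = k
  · rw [if_pos hC]
    rcases Nat.lt_or_ge k i with h | h
    · rw [ggen3_rot, hq k i j hk1 h hij hjn, if_pos (by tauto)]
    · have h' : i < k := by omega
      rcases Nat.lt_or_ge k j with h2 | h2
      · rw [ggen3_swap, hq i k j h1 h' h2 hjn, if_pos (by tauto)]
      · have h2' : j < k := by omega
        rw [hq i j k h1 hij h2' hkn, if_pos (by tauto)]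
  · rw [if_neg hC]
    rcases Nat.lt_or_ge k i with h | h
    · rw [ggen3_rot, hq k i j hk1 h hij hjn, if_neg (by tauto),
          ggen3_rot (n - 1) (del m i) (del m j) (del m k)]
    · have h' : i < k := by omega
      rcases Nat.lt_or_ge k j with h2 | h2
      · rw [ggen3_swap, hq i k j h1 h' h2 hjn, if_neg (by tauto),
            ggen3_swap (n - 1) (del m i) (del m j) (del m k)]
      · have h2' : j < k := by omega
        rw [hq i j k h1 hij h2' hkn, if_neg (by tauto)]

lemma range'_split (s a b : ℕ) :
    List.range' s (a + b) = List.range' s a ++ List.range' (s + a) b := by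
  induction a generalizing s with
  | zero => simp
  | succ a ih =>
    rw [show a + 1 + b = (a + b) + 1 by omega, List.range'_succ, List.range'_succ, ih (s + 1),
        List.cons_append, show s + 1 + a = s + (a + 1) by omega]

lemma range'_map_pred {M : Type*} (g : ℕ → M) (s t : ℕ) :
    (List.range' (s + 1) t).map (fun k => g (k - 1)) = (List.range' s t).map g := by
  induction t generalizing s with
  | zero => rfl
  | succ t ih =>
    rw [List.range'_succ, List.range'_succ, List.map_cons, List.map_cons, ih (s + 1)]
    simp

lemma prod_shift_all {M : Type*} [Monoid M] (f h : ℕ → M) (s t : ℕ)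
    (hfh : ∀ k, s + 1 ≤ k → k < s + 1 + t → f k = h (k - 1)) :
    ((List.range' (s + 1) t).map f).prod = ((List.range' s t).map h).prod := by
  rw [← range'_map_pred h s t]
  refine congrArg _ (List.map_congr_left ?_)
  intro k hk; rw [List.mem_range'_1] at hk
  exact hfh k hk.1 hk.2

lemma prod_split_shift {M : Type*} [Monoid M] (f h : ℕ → M) (s m t : ℕ)
    (hsm : s ≤ m) (hmt : m < s + t)
    (h1 : ∀ k, s ≤ k → k < m → f k = h k) (h2 : f m = 1)
    (h3 : ∀ k, m < k → k < s + t → f k = h (k - 1)) :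
    ((List.range' s t).map f).prod = ((List.range' s (t - 1)).map h).prod := by
  have ha : t = (m - s) + (1 + (t - (m - s) - 1)) := by omega
  conv_lhs => rw [ha, range'_split, range'_split, show s + (m - s) = m by omega]
  rw [List.map_append, List.map_append, List.prod_append, List.prod_append,
      List.range'_one, List.map_singleton, List.prod_singleton, h2, one_mul]
  have e1 : (List.range' s (m - s)).map f = (List.range' s (m - s)).map h := by
    refine List.map_congr_left ?_
    intro k hk; rw [List.mem_range'_1] at hk
    exact h1 k hk.1 (by omega)
  have e3 : ((List.range' (m + 1) (t - (m - s) - 1)).map f).prod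
      = ((List.range' m (t - (m - s) - 1)).map h).prod := by
    refine prod_shift_all f h m _ ?_
    intro k hk1 hk2
    exact h3 k (by omega) (by omega)
  conv_rhs => rw [show t - 1 = (m - s) + (t - (m - s) - 1) by omega, range'_split,
      show s + (m - s) = m by omega]
  rw [e1, e3, List.map_append, List.prod_append]

theorem statement_2 (n m : ℕ) (hn : 4 ≤ n) (hm1 : 1 ≤ m) (hm2 : m ≤ n)
    (q : G3 n →* G3 (n - 1)) (hq : IsShift3 n m q)
    (i j : ℕ) (hi : 1 ≤ i) (hij : i < j) (hj : j ≤ n) :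
    ((m = i ∨ m = j) → q (cElt n i j) = 1) ∧
    (i < m ∧ j < m → q (cElt n i j) = cElt (n - 1) i j) ∧
    (i < m ∧ m < j → q (cElt n i j) = cElt (n - 1) i (j - 1)) ∧
    (m < i → q (cElt n i j) = cElt (n - 1) (i - 1) (j - 1)) := by
  have hQ : ∀ k : ℕ, 1 ≤ k → k ≤ n → k ≠ i → k ≠ j →
      q (ggen3 n i j k) = if m = i ∨ m = j ∨ m = k then 1
        else ggen3 (n - 1) (del m i) (del m j) (del m k) :=
    fun k => qgg q hq i j k hi hij hj
  have hQi : q (ggen3 n i j i) = 1 := by rw [ggen3_self n i j hij, map_one]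
  have hsplit : q (cElt n i j) =
      ((List.range' (j + 1) (n - j)).map fun k => q (ggen3 n i j k)).prod *
      ((List.range' 1 (j - 1)).map fun k => q (ggen3 n i j k)).prod := by
    rw [cElt, map_mul, map_list_prod, map_list_prod, List.map_map, List.map_map]
    rfl
  refine ⟨?_, ?_, ?_, ?_⟩
  · -- m = i ∨ m = j
    intro hm
    rw [hsplit]
    have p1 : ((List.range' (j + 1) (n - j)).map fun k => q (ggen3 n i j k)).prod = 1 := by
      refine List.prod_eq_one ?_
      intro x hx
      obtain ⟨k, hk, rfl⟩ := List.mem_map.mp hx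
      rw [List.mem_range'_1] at hk
      rw [hQ k (by omega) (by omega) (by omega) (by omega), if_pos (by tauto)]
    have p2 : ((List.range' 1 (j - 1)).map fun k => q (ggen3 n i j k)).prod = 1 := by
      refine List.prod_eq_one ?_
      intro x hx
      obtain ⟨k, hk, rfl⟩ := List.mem_map.mp hx
      rw [List.mem_range'_1] at hk
      by_cases hki : k = i
      · rw [hki]; exact hQi
      · rw [hQ k (by omega) (by omega) hki (by omega), if_pos (by tauto)]
    rw [p1, p2, one_mul]
  · -- i < m ∧ j < m
    rintro ⟨him, hjm⟩
    rw [hsplit]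
    have e1 : ((List.range' (j + 1) (n - j)).map fun k => q (ggen3 n i j k)).prod
        = ((List.range' (j + 1) (n - j - 1)).map fun k => ggen3 (n - 1) i j k).prod := by
      refine prod_split_shift _ _ (j + 1) m (n - j) (by omega) (by omega) ?_ ?_ ?_
      · intro k hk1 hk2
        rw [hQ k (by omega) (by omega) (by omega) (by omega), if_neg (by omega),
            del_eq_self (by omega), del_eq_self (by omega), del_eq_self (by omega)]
      · rw [hQ m (by omega) (by omega) (by omega) (by omega), if_pos (by tauto)]
      · intro k hk1 hk2
        rw [hQ k (by omega) (by omega) (by omega) (by omega), if_neg (by omega),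
            del_eq_self (by omega), del_eq_self (by omega), del_eq_pred (by omega)]
    have e2 : ((List.range' 1 (j - 1)).map fun k => q (ggen3 n i j k)).prod
        = ((List.range' 1 (j - 1)).map fun k => ggen3 (n - 1) i j k).prod := by
      refine congrArg _ (List.map_congr_left ?_)
      intro k hk; rw [List.mem_range'_1] at hk
      by_cases hki : k = i
      · rw [hki, hQi, ggen3_self (n - 1) i j hij]
      · rw [hQ k (by omega) (by omega) hki (by omega), if_neg (by omega),
            del_eq_self (by omega), del_eq_self (by omega), del_eq_self (by omega)]
    rw [e1, e2, cElt, show n - 1 - j = n - j - 1 by omega]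
  · -- i < m ∧ m < j
    rintro ⟨him, hmj⟩
    rw [hsplit]
    have e1 : ((List.range' (j + 1) (n - j)).map fun k => q (ggen3 n i j k)).prod
        = ((List.range' j (n - j)).map fun k => ggen3 (n - 1) i (j - 1) k).prod := by
      refine prod_shift_all _ _ j (n - j) ?_
      intro k hk1 hk2
      rw [hQ k (by omega) (by omega) (by omega) (by omega), if_neg (by omega),
          del_eq_self (by omega), del_eq_pred (by omega), del_eq_pred (by omega)]
    have e2 : ((List.range' 1 (j - 1)).map fun k => q (ggen3 n i j k)).prod
        = ((List.range' 1 (j - 1 - 1)).map fun k => ggen3 (n - 1) i (j - 1) k).prod := by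
      refine prod_split_shift _ _ 1 m (j - 1) (by omega) (by omega) ?_ ?_ ?_
      · intro k hk1 hk2
        by_cases hki : k = i
        · rw [hki, hQi, ggen3_self (n - 1) i (j - 1) (by omega)]
        · rw [hQ k (by omega) (by omega) hki (by omega), if_neg (by omega),
              del_eq_self (by omega), del_eq_pred (by omega), del_eq_self (by omega)]
      · rw [hQ m (by omega) (by omega) (by omega) (by omega), if_pos (by tauto)]
      · intro k hk1 hk2
        rw [hQ k (by omega) (by omega) (by omega) (by omega), if_neg (by omega),
            del_eq_self (by omega), del_eq_pred (by omega), del_eq_pred (by omega)]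
    rw [e1, e2, cElt, show j - 1 + 1 = j by omega, show n - 1 - (j - 1) = n - j by omega]
  · -- m < i
    intro hmi
    rw [hsplit]
    have e1 : ((List.range' (j + 1) (n - j)).map fun k => q (ggen3 n i j k)).prod
        = ((List.range' j (n - j)).map fun k => ggen3 (n - 1) (i - 1) (j - 1) k).prod := by
      refine prod_shift_all _ _ j (n - j) ?_
      intro k hk1 hk2
      rw [hQ k (by omega) (by omega) (by omega) (by omega), if_neg (by omega),
          del_eq_pred (by omega), del_eq_pred (by omega), del_eq_pred (by omega)]
    have e2 : ((List.range' 1 (j - 1)).map fun k => q (ggen3 n i j k)).prod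
        = ((List.range' 1 (j - 1 - 1)).map fun k => ggen3 (n - 1) (i - 1) (j - 1) k).prod := by
      refine prod_split_shift _ _ 1 m (j - 1) (by omega) (by omega) ?_ ?_ ?_
      · intro k hk1 hk2
        rw [hQ k (by omega) (by omega) (by omega) (by omega), if_neg (by omega),
            del_eq_pred (by omega), del_eq_pred (by omega), del_eq_self (by omega)]
      · rw [hQ m (by omega) (by omega) (by omega) (by omega), if_pos (by tauto)]
      · intro k hk1 hk2
        by_cases hki : k = i
        · rw [hki, hQi, ggen3_self (n - 1) (i - 1) (j - 1) (by omega)]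
        · rw [hQ k (by omega) (by omega) hki (by omega), if_neg (by omega),
              del_eq_pred (by omega), del_eq_pred (by omega), del_eq_pred (by omega)]
    rw [e1, e2, cElt, show j - 1 + 1 = j by omega, show n - 1 - (j - 1) = n - j by omega]

end GnkBrunnian
end

section
/- For every n ≥ 4 and every Brunnian braid β ∈ PB_n (i.e., p_m(β) = 1 for all m ∈ {1,…,n}), the element φ_n(β) ∈ G_n^3 is Brunnian, i.e., q_m(φ_n(β)) = 1 for all m ∈ {1,…,n}. -/
namespace GnkBrunnian

/-! ## Auxiliary lemmas for statement_5 -/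

section Aux

private lemma prod_inv_mul_reverse {G : Type*} [Group G] (f : ℕ → G) :
    ∀ L : List ℕ, (L.map fun a => (f a)⁻¹).prod * (L.reverse.map f).prod = 1
  | [] => by simp
  | a :: L => by
    have ih := prod_inv_mul_reverse f L
    simp only [List.map_cons, List.prod_cons, List.reverse_cons, List.map_append,
      List.prod_append, List.map_cons, List.map_nil, List.prod_cons, List.prod_nil, mul_one]
    calc (f a)⁻¹ * (List.map (fun a => (f a)⁻¹) L).prod * ((List.map f L.reverse).prod * f a)
        = (f a)⁻¹ * (((List.map (fun a => (f a)⁻¹) L).prod * (List.map f L.reverse).prod) * f a) := by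
          group
      _ = 1 := by rw [ih]; group

private lemma pbgen_eq_of {n a b : ℕ} (h : P2ok n (a, b)) :
    pbgen n a b = PresentedGroup.of (⟨(a, b), h⟩ : PIdx n) := by
  have hab : a < b := h.2.1
  have hs : sort2 a b = (a, b) := by
    simp only [sort2, Prod.mk.injEq]
    omega
  unfold pbgen
  rw [hs]
  exact dif_pos h

private lemma ggen3_eq_of {n : ℕ} {t : ℕ × ℕ × ℕ} (h : T3ok n t) :
    ggen3 n t.1 t.2.1 t.2.2 = PresentedGroup.of (⟨t, h⟩ : TIdx n) := by
  obtain ⟨a, b, c⟩ := t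
  have h1 : 1 ≤ a := h.1
  have h2 : a < b := h.2.1
  have h3 : b < c := h.2.2.1
  have hs : sort3 a b c = (a, b, c) := by
    simp only [sort3, Prod.mk.injEq]
    refine ⟨?_, ?_, ?_⟩ <;> omega
  unfold ggen3
  rw [hs]
  exact dif_pos h

private lemma q_ggen3_one {n m : ℕ} {q : G3 n →* G3 (n - 1)} (hs : IsShift3 n m q)
    (i j k : ℕ) (hmem : m = i ∨ m = j ∨ m = k) : q (ggen3 n i j k) = 1 := by
  by_cases h : T3ok n (sort3 i j k)
  · have e1 : ggen3 n i j k = PresentedGroup.of (⟨sort3 i j k, h⟩ : TIdx n) := by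
      unfold ggen3
      exact dif_pos h
    have hcond : m = (sort3 i j k).1 ∨ m = (sort3 i j k).2.1 ∨ m = (sort3 i j k).2.2 := by
      simp only [sort3]
      omega
    rw [e1, ← ggen3_eq_of h,
      hs _ _ _ h.1 h.2.1 h.2.2.1 h.2.2.2, if_pos hcond]
  · rw [ggen3, dif_neg h, map_one]

private lemma q_cElt_one {n m : ℕ} {q : G3 n →* G3 (n - 1)} (hs : IsShift3 n m q)
    (i j : ℕ) (hmem : m = i ∨ m = j) : q (cElt n i j) = 1 := by
  unfold cElt
  rw [map_mul, map_list_prod, map_list_prod, List.map_map, List.map_map]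
  rw [List.prod_eq_one, List.prod_eq_one, one_mul]
  all_goals
    intro x hx
    rw [List.mem_map] at hx
    obtain ⟨k, -, rfl⟩ := hx
    exact q_ggen3_one hs i j k (by tauto)

private lemma q_phiElt_one {n m : ℕ} {q : G3 n →* G3 (n - 1)} (hs : IsShift3 n m q)
    (i j : ℕ) (hmem : m = i ∨ m = j) : q (phiElt n i j) = 1 := by
  unfold phiElt
  rw [map_mul, map_mul, map_pow, q_cElt_one hs i j hmem, one_pow, mul_one]
  rw [map_list_prod, map_list_prod, List.map_map, List.map_map]
  simp only [Function.comp_def, map_inv]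
  exact prod_inv_mul_reverse (fun a => q (cElt n i a)) _

/-! ### The canonical projection onto `PB n` and the relator lemmas -/

private def mkPB (n : ℕ) : FreeGroup (PIdx n) →* PB n :=
  QuotientGroup.mk' _

private lemma mkPB_fgen2 {n a b : ℕ} : mkPB n (fgen2 n a b) = pbgen n a b := by
  unfold mkPB fgen2 pbgen
  by_cases h : P2ok n (sort2 a b)
  · rw [dif_pos h, dif_pos h]
    rfl
  · rw [dif_neg h, dif_neg h]
    rfl

private lemma mkPB_rel {n : ℕ} {r : FreeGroup (PIdx n)} (hr : r ∈ relsPB n) : mkPB n r = 1 :=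
  (QuotientGroup.eq_one_iff r).mpr (Subgroup.subset_normalClosure hr)

private lemma mem_relsPB1 {n r s i j : ℕ} (h1 : P2ok n (r, s)) (h2 : P2ok n (i, j))
    (hc : s < i ∨ (i < r ∧ s < j)) :
    (fgen2 n r s)⁻¹ * fgen2 n i j * fgen2 n r s * (fgen2 n i j)⁻¹ ∈ relsPB n :=
  Or.inl (Or.inl (Or.inl ⟨r, s, i, j, h1, h2, hc, rfl⟩))

private lemma mem_relsPB2 {n r s j : ℕ} (h1 : 1 ≤ r) (h2 : r < s) (h3 : s < j) (h4 : j ≤ n) :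
    (fgen2 n r s)⁻¹ * fgen2 n s j * fgen2 n r s *
      (fgen2 n r j * fgen2 n s j * (fgen2 n r j)⁻¹)⁻¹ ∈ relsPB n :=
  Or.inl (Or.inl (Or.inr ⟨r, s, j, h1, h2, h3, h4, rfl⟩))

private lemma mem_relsPB3 {n r s j : ℕ} (h1 : 1 ≤ r) (h2 : r < s) (h3 : s < j) (h4 : j ≤ n) :
    (fgen2 n r s)⁻¹ * fgen2 n r j * fgen2 n r s *
      ((fgen2 n r j * fgen2 n s j) * fgen2 n r j * (fgen2 n r j * fgen2 n s j)⁻¹)⁻¹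
      ∈ relsPB n :=
  Or.inl (Or.inr ⟨r, s, j, h1, h2, h3, h4, rfl⟩)

private lemma mem_relsPB4 {n r i s j : ℕ} (h1 : 1 ≤ r) (h2 : r < i) (h3 : i < s) (h4 : s < j)
    (h5 : j ≤ n) :
    (fgen2 n r s)⁻¹ * fgen2 n i j * fgen2 n r s *
      ((fgen2 n r j * fgen2 n s j * (fgen2 n r j)⁻¹ * (fgen2 n s j)⁻¹) * fgen2 n i j *
        (fgen2 n r j * fgen2 n s j * (fgen2 n r j)⁻¹ * (fgen2 n s j)⁻¹)⁻¹)⁻¹ ∈ relsPB n :=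
  Or.inr ⟨r, i, s, j, h1, h2, h3, h4, h5, rfl⟩

/-! ### Lifting indices past a deleted strand -/

private def liftIdx (m x : ℕ) : ℕ := if x < m then x else x + 1

private lemma liftIdx_lt {m a b : ℕ} (h : a < b) : liftIdx m a < liftIdx m b := by
  unfold liftIdx; split_ifs <;> omega

private lemma liftIdx_one_le {m a : ℕ} (h : 1 ≤ a) : 1 ≤ liftIdx m a := by
  unfold liftIdx; split_ifs <;> omega

private lemma liftIdx_le {n m a : ℕ} (hm1 : 1 ≤ m) (hmn : m ≤ n) (h : a ≤ n - 1) :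
    liftIdx m a ≤ n := by
  unfold liftIdx; split_ifs <;> omega

private lemma liftIdx_del {m x : ℕ} (h : m ≠ x) : liftIdx m (del m x) = x := by
  unfold liftIdx del; split_ifs <;> omega

private lemma sort2_liftIdx (m a b : ℕ) :
    sort2 (liftIdx m a) (liftIdx m b) = (liftIdx m (min a b), liftIdx m (max a b)) := by
  simp only [sort2, liftIdx, Prod.mk.injEq]
  split_ifs <;> omega

/-- The lifting map on generators. -/
private def liftF (n m : ℕ) : PIdx (n - 1) → PB n :=
  fun x => pbgen n (liftIdx m x.1.1) (liftIdx m x.1.2)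

private lemma pbgen_congr {n a b c d : ℕ} (h : sort2 a b = sort2 c d) :
    pbgen n a b = pbgen n c d := by
  unfold pbgen; rw [h]

private lemma lift_liftF_fgen2 {n m : ℕ} (hm1 : 1 ≤ m) (hmn : m ≤ n) (a b : ℕ) :
    FreeGroup.lift (liftF n m) (fgen2 (n - 1) a b) =
      pbgen n (liftIdx m a) (liftIdx m b) := by
  by_cases h : P2ok (n - 1) (sort2 a b)
  · rw [fgen2, dif_pos h, FreeGroup.lift_apply_of]
    show pbgen n (liftIdx m (sort2 a b).1) (liftIdx m (sort2 a b).2) = _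
    apply pbgen_congr
    rw [show (sort2 a b).1 = min a b from rfl, show (sort2 a b).2 = max a b from rfl,
      sort2_liftIdx, sort2_liftIdx]
    simp only [Prod.mk.injEq]
    constructor <;> congr 1 <;> omega
  · rw [fgen2, dif_neg h, map_one]
    have hnot : ¬ P2ok n (sort2 (liftIdx m a) (liftIdx m b)) := by
      rw [sort2_liftIdx]
      simp only [P2ok, sort2, not_and] at h ⊢
      unfold liftIdx
      split_ifs <;> omega
    rw [pbgen, dif_neg hnot]

private lemma sigma_relcheck {n m : ℕ} (hm1 : 1 ≤ m) (hmn : m ≤ n) :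
    ∀ r ∈ relsPB (n - 1), FreeGroup.lift (liftF n m) r = 1 := by
  intro r hr
  rcases hr with ((h | h) | h) | h
  · obtain ⟨r', s, i, j, h1, h2, hc, rfl⟩ := h
    simp only [map_mul, map_inv, lift_liftF_fgen2 hm1 hmn]
    have := mkPB_rel (mem_relsPB1 (n := n)
      (r := liftIdx m r') (s := liftIdx m s) (i := liftIdx m i) (j := liftIdx m j)
      ⟨liftIdx_one_le h1.1, liftIdx_lt h1.2.1, liftIdx_le hm1 hmn h1.2.2⟩
      ⟨liftIdx_one_le h2.1, liftIdx_lt h2.2.1, liftIdx_le hm1 hmn h2.2.2⟩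
      (by rcases hc with hc | ⟨hc1, hc2⟩
          · exact Or.inl (liftIdx_lt hc)
          · exact Or.inr ⟨liftIdx_lt hc1, liftIdx_lt hc2⟩))
    simpa only [map_mul, map_inv, mkPB_fgen2] using this
  · obtain ⟨r', s, j, h1, h2, h3, h4, rfl⟩ := h
    simp only [map_mul, map_inv, lift_liftF_fgen2 hm1 hmn]
    have := mkPB_rel (mem_relsPB2 (n := n)
      (liftIdx_one_le h1) (liftIdx_lt h2) (liftIdx_lt h3) (liftIdx_le hm1 hmn h4))
    simpa only [map_mul, map_inv, mkPB_fgen2] using this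
  · obtain ⟨r', s, j, h1, h2, h3, h4, rfl⟩ := h
    simp only [map_mul, map_inv, lift_liftF_fgen2 hm1 hmn]
    have := mkPB_rel (mem_relsPB3 (n := n)
      (liftIdx_one_le h1) (liftIdx_lt h2) (liftIdx_lt h3) (liftIdx_le hm1 hmn h4))
    simpa only [map_mul, map_inv, mkPB_fgen2] using this
  · obtain ⟨r', i, s, j, h1, h2, h3, h4, h5, rfl⟩ := h
    simp only [map_mul, map_inv, lift_liftF_fgen2 hm1 hmn]
    have := mkPB_rel (mem_relsPB4 (n := n)
      (liftIdx_one_le h1) (liftIdx_lt h2) (liftIdx_lt h3) (liftIdx_lt h4)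
      (liftIdx_le hm1 hmn h5))
    simpa only [map_mul, map_inv, mkPB_fgen2] using this

end Aux


theorem statement_5 (n : ℕ) (hn : 4 ≤ n)
    (p : ℕ → (PB n →* PB (n - 1))) (hp : ∀ m, 1 ≤ m → m ≤ n → IsShiftPB n m (p m))
    (q : ℕ → (G3 n →* G3 (n - 1))) (hq : ∀ m, 1 ≤ m → m ≤ n → IsShift3 n m (q m))
    (φ : PB n →* G3 n) (hφ : IsPhi n φ)
    (β : PB n) (hβ : ∀ m, 1 ≤ m → m ≤ n → p m β = 1) :
    ∀ m, 1 ≤ m → m ≤ n → q m (φ β) = 1 := by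
  intro m hm1 hmn
  let N : Subgroup (PB n) := Subgroup.normalClosure
    {x | ∃ i j : ℕ, (1 ≤ i ∧ i < j ∧ j ≤ n) ∧ (m = i ∨ m = j) ∧ x = pbgen n i j}
  let σ : PB (n - 1) →* PB n := PresentedGroup.toGroup (sigma_relcheck hm1 hmn)
  have hσ_pbgen : ∀ a b : ℕ, 1 ≤ a → a < b → b ≤ n - 1 →
      σ (pbgen (n - 1) a b) = pbgen n (liftIdx m a) (liftIdx m b) := by
    intro a b ha hab hb
    rw [pbgen_eq_of (n := n - 1) ⟨ha, hab, hb⟩]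
    exact PresentedGroup.toGroup.of (sigma_relcheck hm1 hmn)
  have hcomp : (QuotientGroup.mk' N).comp (σ.comp (p m)) = QuotientGroup.mk' N := by
    apply PresentedGroup.ext
    rintro ⟨⟨i, j⟩, hx⟩
    have h1 : 1 ≤ i := hx.1
    have h2 : i < j := hx.2.1
    have h3 : j ≤ n := hx.2.2
    have hofx : (PresentedGroup.of (⟨(i, j), hx⟩ : PIdx n) : PB n) = pbgen n i j :=
      (pbgen_eq_of hx).symm
    simp only [MonoidHom.comp_apply, hofx]
    rw [hp m hm1 hmn i j h1 h2 h3]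
    by_cases hm' : m = i ∨ m = j
    · rw [if_pos hm', map_one, map_one]
      have hmem : pbgen n i j ∈ N :=
        Subgroup.subset_normalClosure ⟨i, j, ⟨h1, h2, h3⟩, hm', rfl⟩
      exact ((QuotientGroup.eq_one_iff _).mpr hmem).symm
    · push_neg at hm'
      rw [if_neg (by tauto)]
      have hd1 : 1 ≤ del m i := by unfold del; split_ifs <;> omega
      have hd2 : del m i < del m j := by unfold del; split_ifs <;> omega
      have hd3 : del m j ≤ n - 1 := by unfold del; split_ifs <;> omega
      rw [hσ_pbgen _ _ hd1 hd2 hd3, liftIdx_del hm'.1, liftIdx_del hm'.2]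
  have hβ1 : p m β = 1 := hβ m hm1 hmn
  have hβN : β ∈ N := by
    have h1 : (QuotientGroup.mk' N) ((σ.comp (p m)) β) = (QuotientGroup.mk' N) β := by
      have := DFunLike.congr_fun hcomp β
      simpa using this
    rw [MonoidHom.comp_apply, hβ1, map_one, map_one] at h1
    exact (QuotientGroup.eq_one_iff β).mp h1.symm
  have hker : N ≤ ((q m).comp φ).ker := by
    apply Subgroup.normalClosure_le_normal
    rintro x ⟨i, j, ⟨h1, h2, h3⟩, hm', rfl⟩
    rw [SetLike.mem_coe, MonoidHom.mem_ker, MonoidHom.comp_apply, hφ i j h1 h2 h3]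
    exact q_phiElt_one (hq m hm1 hmn) i j hm'
  have hfin := hker hβN
  rwa [MonoidHom.mem_ker, MonoidHom.comp_apply] at hfin


end GnkBrunnian
end

section
/- Fix n ≥ 4 and distinct i,j,k ∈ {1,…,n}. If β and β′ are words in the generators of G_n^3 that are both in good condition and represent the same element of G_n^3, then w_{(i,j,k)}(β) = w_{(i,j,k)}(β′) in F_n^3. In other words, w_{(i,j,k)} is a well-defined invariant on the subgroup of good-condition elements of G_n^3. -/
namespace GnkBrunnian

/-! ## Auxiliary development for Theorem 6 -/

section WellDef

open Multiplicative

theorem triple_eq_iff {x y z a b c : ℕ} :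
    ({x, y, z} : Finset ℕ) = {a, b, c} ↔
      ∀ t : ℕ, (t = x ∨ t = y ∨ t = z ↔ t = a ∨ t = b ∨ t = c) := by
  simp [Finset.ext_iff]

theorem zmod2_add_self (x : ZMod 2) : x + x = 0 := by
  have h2 : (2 : ZMod 2) = 0 := rfl
  rw [← two_mul, h2, zero_mul]

theorem fp2_of_mul_self {ι : Type} (a : ι) :
    (PresentedGroup.of a : FP2 ι) * PresentedGroup.of a = 1 := by
  have h : (FreeGroup.of a * FreeGroup.of a : FreeGroup ι) ∈
      Subgroup.normalClosure {r : FreeGroup ι | ∃ b : ι, r = .of b * .of b} :=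
    Subgroup.subset_normalClosure ⟨a, rfl⟩
  show PresentedGroup.mk _ (FreeGroup.of a) * PresentedGroup.mk _ (FreeGroup.of a) = 1
  rw [← map_mul]
  exact (QuotientGroup.eq_one_iff _).mpr h

/-- The index type of `F3`, also used as shift data. -/
abbrev DD (n i j k : ℕ) := SIdx3 n i j k → ZMod 2 × ZMod 2

theorem dd_add_self {n i j k : ℕ} (d : DD n i j k) : d + d = 0 := by
  funext l
  show d l + d l = 0
  rw [Prod.ext_iff]
  exact ⟨by simpa using zmod2_add_self (d l).1, by simpa using zmod2_add_self (d l).2⟩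

theorem dd_eq_of_add_eq_zero {n i j k : ℕ} {d d' : DD n i j k} (h : d + d' = 0) : d = d' := by
  calc d = d + (d' + d') := by rw [dd_add_self, add_zero]
  _ = (d + d') + d' := by rw [add_assoc]
  _ = d' := by rw [h, zero_add]

/-- The "shift" endomorphism of `F3` induced by translating the index set. -/
def shiftF {n i j k : ℕ} (d : DD n i j k) : F3 n i j k →* F3 n i j k :=
  PresentedGroup.toGroup (f := fun σ : DD n i j k => (PresentedGroup.of (σ + d) : F3 n i j k))
    (by rintro r ⟨a, rfl⟩
        rw [map_mul, FreeGroup.lift_apply_of]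
        exact fp2_of_mul_self _)

@[simp] theorem shiftF_of {n i j k : ℕ} (d σ : DD n i j k) :
    shiftF d (PresentedGroup.of σ) = PresentedGroup.of (σ + d) :=
  PresentedGroup.toGroup.of _

theorem shiftF_shiftF {n i j k : ℕ} (d e : DD n i j k) (x : F3 n i j k) :
    shiftF d (shiftF e x) = shiftF (e + d) x := by
  have h : (shiftF d).comp (shiftF e) = shiftF (e + d) := by
    ext σ
    simp [MonoidHom.comp_apply, add_assoc]
  exact DFunLike.congr_fun h x

theorem shiftF_zero {n i j k : ℕ} (x : F3 n i j k) : shiftF (0 : DD n i j k) x = x := by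
  have h : shiftF (0 : DD n i j k) = MonoidHom.id _ := by
    ext σ
    simp
  rw [h, MonoidHom.id_apply]

/-- The shift automorphism. -/
def shiftAut {n i j k : ℕ} (d : DD n i j k) : MulAut (F3 n i j k) where
  toFun := shiftF d
  invFun := shiftF d
  left_inv x := by rw [shiftF_shiftF, dd_add_self, shiftF_zero]
  right_inv x := by rw [shiftF_shiftF, dd_add_self, shiftF_zero]
  map_mul' := map_mul _

/-- The shift data associated to a mod-2 count vector. -/
def deltaF (n i j k : ℕ) (N : Finset ℕ → ZMod 2) : DD n i j k :=
  fun l => (N {j, k, l.1} + N {i, j, l.1}, N {i, k, l.1} + N {i, j, l.1})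

theorem deltaF_add (n i j k : ℕ) (M N : Finset ℕ → ZMod 2) :
    deltaF n i j k (M + N) = deltaF n i j k M + deltaF n i j k N := by
  funext l
  simp only [deltaF, Pi.add_apply, Prod.mk_add_mk, Prod.mk.injEq]
  constructor <;> ring

theorem deltaF_zero (n i j k : ℕ) : deltaF n i j k 0 = 0 := by
  funext l
  simp [deltaF, Prod.ext_iff]

/-- The action of count vectors on `F3` by shifts. -/
def phiA (n i j k : ℕ) : Multiplicative (Finset ℕ → ZMod 2) →* MulAut (F3 n i j k) where
  toFun N := shiftAut (deltaF n i j k N.toAdd)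
  map_one' := by
    ext x
    show shiftF (deltaF n i j k (Multiplicative.toAdd 1)) x = x
    rw [toAdd_one, deltaF_zero, shiftF_zero]
  map_mul' N M := by
    ext x
    show shiftF (deltaF n i j k (Multiplicative.toAdd (N * M))) x =
      shiftF (deltaF n i j k N.toAdd) (shiftF (deltaF n i j k M.toAdd) x)
    rw [shiftF_shiftF, toAdd_mul, deltaF_add, add_comm]

@[simp] theorem phiA_apply {n i j k : ℕ} (N : Multiplicative (Finset ℕ → ZMod 2))
    (x : F3 n i j k) : (phiA n i j k N) x = shiftF (deltaF n i j k N.toAdd) x := rfl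

/-- Indicator count vector of a single letter. -/
def eF {n : ℕ} (g : TIdx n) : Finset ℕ → ZMod 2 := fun s => if tripSet g = s then 1 else 0

/-- Mod-2 count vector of a word. -/
def EvF {n : ℕ} (β : List (TIdx n)) : Finset ℕ → ZMod 2 :=
  fun s => ((β.filter fun x => decide (tripSet x = s)).length : ZMod 2)

theorem EvF_nil {n : ℕ} : EvF ([] : List (TIdx n)) = 0 := by
  funext s; simp [EvF]

theorem EvF_append {n : ℕ} (l₁ l₂ : List (TIdx n)) : EvF (l₁ ++ l₂) = EvF l₁ + EvF l₂ := by
  funext s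
  simp [EvF, List.filter_append]

theorem EvF_singleton {n : ℕ} (g : TIdx n) : EvF [g] = eF g := by
  funext s
  by_cases h : tripSet g = s <;> simp [EvF, eF, h]

theorem EvF_cons {n : ℕ} (g : TIdx n) (γ : List (TIdx n)) : EvF (g :: γ) = eF g + EvF γ := by
  rw [show g :: γ = [g] ++ γ from rfl, EvF_append, EvF_singleton]

theorem eF_add_self {n : ℕ} (g : TIdx n) : eF g + eF g = 0 := by
  funext s
  exact zmod2_add_self _

theorem iC3_eq {n : ℕ} (i j k : ℕ) (pre : List (TIdx n)) :
    iC3 i j k pre = deltaF n i j k (EvF pre) := by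
  funext l
  simp only [iC3, deltaF, EvF, cnt3, Prod.mk.injEq]
  constructor <;> push_cast <;> ring

end WellDef

section WellDef2

open Multiplicative

theorem deltaF_eF_zero {n i j k : ℕ} {g : TIdx n}
    (hg : ∀ l : SIdx3 n i j k,
      tripSet g ≠ {j, k, l.1} ∧ tripSet g ≠ {i, j, l.1} ∧ tripSet g ≠ {i, k, l.1}) :
    deltaF n i j k (eF g) = 0 := by
  funext l
  obtain ⟨h1, h2, h3⟩ := hg l
  simp [deltaF, eF, h1, h2, h3, Prod.ext_iff]

theorem deltaF_eF_S {n i j k : ℕ} {g : TIdx n} (hg : tripSet g = {i, j, k}) :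
    deltaF n i j k (eF g) = 0 := by
  apply deltaF_eF_zero
  intro l
  obtain ⟨⟨hl1, hln⟩, hli, hlj, hlk⟩ := l.2
  refine ⟨?_, ?_, ?_⟩ <;>
    · rw [hg]
      intro hE
      rw [triple_eq_iff] at hE
      have h1 := (hE l.1).mpr (Or.inr (Or.inr rfl))
      omega

theorem deltaF_eF_card {n i j k : ℕ} (hij : i ≠ j) (hik : i ≠ k) (hjk : j ≠ k) {g : TIdx n}
    (hcard : (({i, j, k} : Finset ℕ) ∩ tripSet g).card < 2) :
    deltaF n i j k (eF g) = 0 := by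
  apply deltaF_eF_zero
  intro l
  refine ⟨?_, ?_, ?_⟩ <;> intro hE
  · have hsub : ({j, k} : Finset ℕ) ⊆ {i, j, k} ∩ tripSet g := by
      intro x hx
      rw [Finset.mem_inter, hE]
      simp only [Finset.mem_insert, Finset.mem_singleton] at hx ⊢
      rcases hx with rfl | rfl <;> tauto
    have hle := Finset.card_le_card hsub
    rw [Finset.card_pair hjk] at hle
    omega
  · have hsub : ({i, j} : Finset ℕ) ⊆ {i, j, k} ∩ tripSet g := by
      intro x hx
      rw [Finset.mem_inter, hE]
      simp only [Finset.mem_insert, Finset.mem_singleton] at hx ⊢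
      rcases hx with rfl | rfl <;> tauto
    have hle := Finset.card_le_card hsub
    rw [Finset.card_pair hij] at hle
    omega
  · have hsub : ({i, k} : Finset ℕ) ⊆ {i, j, k} ∩ tripSet g := by
      intro x hx
      rw [Finset.mem_inter, hE]
      simp only [Finset.mem_insert, Finset.mem_singleton] at hx ⊢
      rcases hx with rfl | rfl <;> tauto
    have hle := Finset.card_le_card hsub
    rw [Finset.card_pair hik] at hle
    omega

theorem tripm_eq_iff {x y a b m : ℕ} (hab : a ≠ b) (hx : x ≠ m) (hy : y ≠ m)
    (ha : a ≠ m) (hb : b ≠ m) :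
    (({x, y, m} : Finset ℕ) = {a, b, m}) ↔ ((x = a ∧ y = b) ∨ (x = b ∧ y = a)) := by
  rw [triple_eq_iff]
  constructor
  · intro h
    have h1 : x = a ∨ x = b ∨ x = m := (h x).mp (Or.inl rfl)
    have h2 : y = a ∨ y = b ∨ y = m := (h y).mp (Or.inr (Or.inl rfl))
    have h3 : a = x ∨ a = y ∨ a = m := (h a).mpr (Or.inl rfl)
    have h4 : b = x ∨ b = y ∨ b = m := (h b).mpr (Or.inr (Or.inl rfl))
    omega
  · intro h t
    rcases h with ⟨rfl, rfl⟩ | ⟨rfl, rfl⟩ <;> tauto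

theorem claimLemma {n : ℕ} {u v w m L a b : ℕ} (X Y Z : TIdx n)
    (hX : tripSet X = {u, v, m}) (hY : tripSet Y = {u, w, m}) (hZ : tripSet Z = {v, w, m})
    (huv : u ≠ v) (huw : u ≠ w) (hvw : v ≠ w) (hm : ¬(m = u ∨ m = v ∨ m = w))
    (ha : a = u ∨ a = v ∨ a = w) (hb : b = u ∨ b = v ∨ b = w) (hab : a ≠ b) :
    eF X {a, b, L} + eF Y {a, b, L} + eF Z {a, b, L} = if L = m then (1 : ZMod 2) else 0 := by
  simp only [eF, hX, hY, hZ]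
  by_cases hl : L = m
  · rw [hl]
    have hum : u ≠ m := by omega
    have hvm : v ≠ m := by omega
    have hwm : w ≠ m := by omega
    have ham : a ≠ m := by omega
    have hbm : b ≠ m := by omega
    simp only [tripm_eq_iff hab hum hvm ham hbm, tripm_eq_iff hab hum hwm ham hbm,
      tripm_eq_iff hab hvm hwm ham hbm, if_pos (rfl : m = m)]
    rcases ha with rfl | rfl | rfl
    · rcases hb with rfl | rfl | rfl
      · exact absurd rfl hab
      · rw [if_pos (Or.inl ⟨rfl, rfl⟩), if_neg (by rintro (⟨h1, h2⟩ | ⟨h1, h2⟩) <;> omega),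
          if_neg (by rintro (⟨h1, h2⟩ | ⟨h1, h2⟩) <;> omega)]
        decide
      · rw [if_neg (by rintro (⟨h1, h2⟩ | ⟨h1, h2⟩) <;> omega), if_pos (Or.inl ⟨rfl, rfl⟩),
          if_neg (by rintro (⟨h1, h2⟩ | ⟨h1, h2⟩) <;> omega)]
        decide
    · rcases hb with rfl | rfl | rfl
      · rw [if_pos (Or.inr ⟨rfl, rfl⟩), if_neg (by rintro (⟨h1, h2⟩ | ⟨h1, h2⟩) <;> omega),
          if_neg (by rintro (⟨h1, h2⟩ | ⟨h1, h2⟩) <;> omega)]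
        decide
      · exact absurd rfl hab
      · rw [if_neg (by rintro (⟨h1, h2⟩ | ⟨h1, h2⟩) <;> omega),
          if_neg (by rintro (⟨h1, h2⟩ | ⟨h1, h2⟩) <;> omega), if_pos (Or.inl ⟨rfl, rfl⟩)]
        decide
    · rcases hb with rfl | rfl | rfl
      · rw [if_neg (by rintro (⟨h1, h2⟩ | ⟨h1, h2⟩) <;> omega), if_pos (Or.inr ⟨rfl, rfl⟩),
          if_neg (by rintro (⟨h1, h2⟩ | ⟨h1, h2⟩) <;> omega)]
        decide
      · rw [if_neg (by rintro (⟨h1, h2⟩ | ⟨h1, h2⟩) <;> omega),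
          if_neg (by rintro (⟨h1, h2⟩ | ⟨h1, h2⟩) <;> omega), if_pos (Or.inr ⟨rfl, rfl⟩)]
        decide
      · exact absurd rfl hab
  · rw [if_neg hl,
      if_neg (show ¬(({u, v, m} : Finset ℕ) = {a, b, L}) from by intro hE; rw [triple_eq_iff] at hE; have h1 := (hE m).mp (Or.inr (Or.inr rfl)); omega),
      if_neg (show ¬(({u, w, m} : Finset ℕ) = {a, b, L}) from by intro hE; rw [triple_eq_iff] at hE; have h1 := (hE m).mp (Or.inr (Or.inr rfl)); omega),
      if_neg (show ¬(({v, w, m} : Finset ℕ) = {a, b, L}) from by intro hE; rw [triple_eq_iff] at hE; have h1 := (hE m).mp (Or.inr (Or.inr rfl)); omega)]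
    decide

set_option maxHeartbeats 800000 in
theorem deltaKey {n : ℕ} (i j k : ℕ) (hij : i ≠ j) (hik : i ≠ k) (hjk : j ≠ k)
    {u v w m : ℕ} (hS : ({u, v, w} : Finset ℕ) = {i, j, k})
    (hm : ¬(m = u ∨ m = v ∨ m = w))
    (X Y Z : TIdx n) (hX : tripSet X = {u, v, m}) (hY : tripSet Y = {u, w, m})
    (hZ : tripSet Z = {v, w, m}) :
    deltaF n i j k (eF X) + deltaF n i j k (eF Y) + deltaF n i j k (eF Z) = 0 := by
  have hS' := triple_eq_iff.mp hS
  have hiu : i = u ∨ i = v ∨ i = w := (hS' i).mpr (Or.inl rfl)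
  have hju : j = u ∨ j = v ∨ j = w := (hS' j).mpr (Or.inr (Or.inl rfl))
  have hku : k = u ∨ k = v ∨ k = w := (hS' k).mpr (Or.inr (Or.inr rfl))
  have huv : u ≠ v := by intro h; omega
  have huw : u ≠ w := by intro h; omega
  have hvw : v ≠ w := by intro h; omega
  funext l
  have e1 := claimLemma (L := l.1) X Y Z hX hY hZ huv huw hvw hm hju hku hjk
  have e2 := claimLemma (L := l.1) X Y Z hX hY hZ huv huw hvw hm hiu hju hij
  have e3 := claimLemma (L := l.1) X Y Z hX hY hZ huv huw hvw hm hiu hku hik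
  refine Prod.ext_iff.mpr ⟨?_, ?_⟩
  · simp only [Pi.add_apply, Pi.zero_apply, deltaF, Prod.fst_add, Prod.fst_zero]
    have hre : eF X {j, k, l.1} + eF X {i, j, l.1} + (eF Y {j, k, l.1} + eF Y {i, j, l.1})
        + (eF Z {j, k, l.1} + eF Z {i, j, l.1})
        = (eF X {j, k, l.1} + eF Y {j, k, l.1} + eF Z {j, k, l.1})
        + (eF X {i, j, l.1} + eF Y {i, j, l.1} + eF Z {i, j, l.1}) := by ring
    rw [hre, e1, e2]
    by_cases hl : l.1 = m
    · rw [if_pos hl]; decide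
    · rw [if_neg hl]; decide
  · simp only [Pi.add_apply, Pi.zero_apply, deltaF, Prod.snd_add, Prod.snd_zero]
    have hre : eF X {i, k, l.1} + eF X {i, j, l.1} + (eF Y {i, k, l.1} + eF Y {i, j, l.1})
        + (eF Z {i, k, l.1} + eF Z {i, j, l.1})
        = (eF X {i, k, l.1} + eF Y {i, k, l.1} + eF Z {i, k, l.1})
        + (eF X {i, j, l.1} + eF Y {i, j, l.1} + eF Z {i, j, l.1}) := by ring
    rw [hre, e3, e2]
    by_cases hl : l.1 = m
    · rw [if_pos hl]; decide
    · rw [if_neg hl]; decide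

end WellDef2

section WellDef3

open Multiplicative

theorem sort3_ok {n a b c : ℕ} (h1 : 1 ≤ a) (h2 : 1 ≤ b) (h3 : 1 ≤ c)
    (ha : a ≤ n) (hb : b ≤ n) (hc : c ≤ n) (hab : a ≠ b) (hac : a ≠ c) (hbc : b ≠ c) :
    T3ok n (sort3 a b c) := by
  simp only [T3ok, sort3]
  omega

theorem sort3_tripSet {n a b c : ℕ} (h : T3ok n (sort3 a b c)) :
    tripSet (⟨sort3 a b c, h⟩ : TIdx n) = {a, b, c} := by
  simp only [tripSet]
  rw [triple_eq_iff]
  intro t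
  simp only [sort3]
  omega

/-- The target group recording counts and the invariant. -/
abbrev HH (n i j k : ℕ) :=
  SemidirectProduct (F3 n i j k) (Multiplicative (Finset ℕ → ZMod 2)) (phiA n i j k)

/-- The image of a generator in `HH`. -/
def LF (n i j k : ℕ) (g : TIdx n) : HH n i j k :=
  ⟨if tripSet g = ({i, j, k} : Finset ℕ) then PresentedGroup.of 0 else 1,
    Multiplicative.ofAdd (eF g)⟩

theorem ofAdd_eF_sq {n : ℕ} (g : TIdx n) :
    Multiplicative.ofAdd (eF g) * Multiplicative.ofAdd (eF g)
      = (1 : Multiplicative (Finset ℕ → ZMod 2)) := by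
  rw [← ofAdd_add, eF_add_self, ofAdd_zero]

theorem LF_sq {n i j k : ℕ} (a : TIdx n) : LF n i j k a * LF n i j k a = 1 := by
  refine SemidirectProduct.ext ?_ ?_
  · rw [SemidirectProduct.mul_left, SemidirectProduct.one_left]
    by_cases h : tripSet a = ({i, j, k} : Finset ℕ)
    · simp only [LF, if_pos h, phiA_apply, toAdd_ofAdd]
      rw [deltaF_eF_S h, shiftF_zero]
      exact fp2_of_mul_self _
    · simp only [LF, if_neg h, map_one, mul_one]
  · rw [SemidirectProduct.mul_right, SemidirectProduct.one_right]
    exact ofAdd_eF_sq a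

theorem LF_comm {n i j k : ℕ} (hij : i ≠ j) (hik : i ≠ k) (hjk : j ≠ k) (a b : TIdx n)
    (hcard : (tripSet a ∩ tripSet b).card < 2) :
    LF n i j k a * LF n i j k b = LF n i j k b * LF n i j k a := by
  have card3 : ({i, j, k} : Finset ℕ).card = 3 := by
    rw [Finset.card_insert_of_notMem (by simp [hij, hik]), Finset.card_pair hjk]
  refine SemidirectProduct.ext ?_ ?_
  · rw [SemidirectProduct.mul_left, SemidirectProduct.mul_left]
    by_cases ha : tripSet a = ({i, j, k} : Finset ℕ) <;>
      by_cases hb : tripSet b = ({i, j, k} : Finset ℕ)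
    · exfalso
      rw [ha, hb, Finset.inter_self, card3] at hcard
      omega
    · simp only [LF, if_pos ha, if_neg hb, phiA_apply, toAdd_ofAdd, map_one, mul_one, one_mul]
      have hz : deltaF n i j k (eF b) = 0 := by
        apply deltaF_eF_card hij hik hjk
        rw [← ha]
        exact hcard
      rw [hz, shiftF_zero]
    · simp only [LF, if_neg ha, if_pos hb, phiA_apply, toAdd_ofAdd, map_one, mul_one, one_mul]
      have hz : deltaF n i j k (eF a) = 0 := by
        apply deltaF_eF_card hij hik hjk
        rw [← hb, Finset.inter_comm]
        exact hcard
      rw [hz, shiftF_zero]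
    · simp only [LF, if_neg ha, if_neg hb, map_one, mul_one]
  · rw [SemidirectProduct.mul_right, SemidirectProduct.mul_right]
    exact mul_comm _ _

end WellDef3

section WellDef4

open Multiplicative

@[simp] theorem LF_left {n i j k : ℕ} (g : TIdx n) :
    (LF n i j k g).left
      = if tripSet g = ({i, j, k} : Finset ℕ) then PresentedGroup.of 0 else 1 := rfl

@[simp] theorem LF_right {n i j k : ℕ} (g : TIdx n) :
    (LF n i j k g).right = Multiplicative.ofAdd (eF g) := rfl

theorem left4 {n i j k : ℕ} (A B C D : TIdx n) :
    (LF n i j k A * LF n i j k B * LF n i j k C * LF n i j k D).left =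
      (LF n i j k A).left
      * shiftF (deltaF n i j k (eF A)) ((LF n i j k B).left)
      * shiftF (deltaF n i j k (eF A) + deltaF n i j k (eF B)) ((LF n i j k C).left)
      * shiftF (deltaF n i j k (eF A) + deltaF n i j k (eF B) + deltaF n i j k (eF C))
          ((LF n i j k D).left) := by
  simp only [SemidirectProduct.mul_left, SemidirectProduct.mul_right, LF_right, phiA_apply,
    toAdd_mul, toAdd_ofAdd, deltaF_add]

theorem comm4 {G : Type} [CommGroup G] (a b c d : G) : a * b * c * d = d * c * b * a := by
  simp [mul_comm, mul_left_comm]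

set_option maxHeartbeats 1600000 in
theorem LF_tetra {n i j k : ℕ} (hij : i ≠ j) (hik : i ≠ k) (hjk : j ≠ k)
    {p q u v : ℕ}
    (hpq : p ≠ q) (hpu : p ≠ u) (hpv : p ≠ v) (hqu : q ≠ u) (hqv : q ≠ v) (huv : u ≠ v)
    (A B C D : TIdx n) (hA : tripSet A = {p, q, u}) (hB : tripSet B = {p, q, v})
    (hC : tripSet C = {p, u, v}) (hD : tripSet D = {q, u, v}) :
    LF n i j k A * LF n i j k B * LF n i j k C * LF n i j k D
      = LF n i j k D * LF n i j k C * LF n i j k B * LF n i j k A := by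
  refine SemidirectProduct.ext ?_ ?_
  · rw [left4, left4]
    by_cases hA' : tripSet A = ({i, j, k} : Finset ℕ)
    · have hB' : tripSet B ≠ ({i, j, k} : Finset ℕ) := by
        intro h
        have hE : ({p, q, v} : Finset ℕ) = {p, q, u} := by rw [← hB, h, ← hA', hA]
        rw [triple_eq_iff] at hE
        have h1 := (hE v).mp (Or.inr (Or.inr rfl))
        omega
      have hC' : tripSet C ≠ ({i, j, k} : Finset ℕ) := by
        intro h
        have hE : ({p, u, v} : Finset ℕ) = {p, q, u} := by rw [← hC, h, ← hA', hA]
        rw [triple_eq_iff] at hE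
        have h1 := (hE v).mp (Or.inr (Or.inr rfl))
        omega
      have hD' : tripSet D ≠ ({i, j, k} : Finset ℕ) := by
        intro h
        have hE : ({q, u, v} : Finset ℕ) = {p, q, u} := by rw [← hD, h, ← hA', hA]
        rw [triple_eq_iff] at hE
        have h1 := (hE v).mp (Or.inr (Or.inr rfl))
        omega
      have hkey := deltaKey i j k hij hik hjk
        (show ({p, q, u} : Finset ℕ) = {i, j, k} from by rw [← hA]; exact hA')
        (show ¬(v = p ∨ v = q ∨ v = u) from by omega) B C D hB hC hD
      simp only [LF_left, if_pos hA', if_neg hB', if_neg hC', if_neg hD', map_one, mul_one,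
        one_mul, shiftF_of, zero_add]
      have hz : (0 : DD n i j k) = deltaF n i j k (eF D) + deltaF n i j k (eF C)
          + deltaF n i j k (eF B) := by
        rw [← hkey]; abel
      rw [← hz]
    · by_cases hB' : tripSet B = ({i, j, k} : Finset ℕ)
      · have hC' : tripSet C ≠ ({i, j, k} : Finset ℕ) := by
          intro h
          have hE : ({p, u, v} : Finset ℕ) = {p, q, v} := by rw [← hC, h, ← hB', hB]
          rw [triple_eq_iff] at hE
          have h1 := (hE u).mp (Or.inr (Or.inl rfl))
          omega
        have hD' : tripSet D ≠ ({i, j, k} : Finset ℕ) := by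
          intro h
          have hE : ({q, u, v} : Finset ℕ) = {p, q, v} := by rw [← hD, h, ← hB', hB]
          rw [triple_eq_iff] at hE
          have h1 := (hE u).mp (Or.inr (Or.inl rfl))
          omega
        have hkey := deltaKey i j k hij hik hjk
          (show ({p, q, v} : Finset ℕ) = {i, j, k} from by rw [← hB]; exact hB')
          (show ¬(u = p ∨ u = q ∨ u = v) from by omega) A C D hA
          (show tripSet C = ({p, v, u} : Finset ℕ) from by
            rw [hC, triple_eq_iff]; intro t; tauto)
          (show tripSet D = ({q, v, u} : Finset ℕ) from by
            rw [hD, triple_eq_iff]; intro t; tauto)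
        simp only [LF_left, if_neg hA', if_pos hB', if_neg hC', if_neg hD', map_one, mul_one,
          one_mul, shiftF_of, zero_add]
        exact congrArg _ (dd_eq_of_add_eq_zero (by rw [← hkey]; try abel))
      · by_cases hC' : tripSet C = ({i, j, k} : Finset ℕ)
        · have hD' : tripSet D ≠ ({i, j, k} : Finset ℕ) := by
            intro h
            have hE : ({q, u, v} : Finset ℕ) = {p, u, v} := by rw [← hD, h, ← hC', hC]
            rw [triple_eq_iff] at hE
            have h1 := (hE q).mp (Or.inl rfl)
            omega
          have hkey := deltaKey i j k hij hik hjk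
            (show ({p, u, v} : Finset ℕ) = {i, j, k} from by rw [← hC]; exact hC')
            (show ¬(q = p ∨ q = u ∨ q = v) from by omega) A B D
            (show tripSet A = ({p, u, q} : Finset ℕ) from by
              rw [hA, triple_eq_iff]; intro t; tauto)
            (show tripSet B = ({p, v, q} : Finset ℕ) from by
              rw [hB, triple_eq_iff]; intro t; tauto)
            (show tripSet D = ({u, v, q} : Finset ℕ) from by
              rw [hD, triple_eq_iff]; intro t; tauto)
          simp only [LF_left, if_neg hA', if_neg hB', if_pos hC', if_neg hD', map_one, mul_one,
            one_mul, shiftF_of, zero_add]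
          exact congrArg _ (dd_eq_of_add_eq_zero (by rw [← hkey]; try abel))
        · by_cases hD' : tripSet D = ({i, j, k} : Finset ℕ)
          · have hkey := deltaKey i j k hij hik hjk
              (show ({q, u, v} : Finset ℕ) = {i, j, k} from by rw [← hD]; exact hD')
              (show ¬(p = q ∨ p = u ∨ p = v) from by omega) A B C
              (show tripSet A = ({q, u, p} : Finset ℕ) from by
                rw [hA, triple_eq_iff]; intro t; tauto)
              (show tripSet B = ({q, v, p} : Finset ℕ) from by
                rw [hB, triple_eq_iff]; intro t; tauto)
              (show tripSet C = ({u, v, p} : Finset ℕ) from by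
                rw [hC, triple_eq_iff]; intro t; tauto)
            simp only [LF_left, if_neg hA', if_neg hB', if_neg hC', if_pos hD', map_one, mul_one,
              one_mul, shiftF_of, zero_add]
            rw [hkey]
          · simp only [LF_left, if_neg hA', if_neg hB', if_neg hC', if_neg hD', map_one, mul_one,
              one_mul]
  · simp only [SemidirectProduct.mul_right, LF_right]
    exact comm4 _ _ _ _

end WellDef4

section WellDef5

open Multiplicative

theorem LF_rels {n i j k : ℕ} (hij : i ≠ j) (hik : i ≠ k) (hjk : j ≠ k) :
    ∀ r ∈ rels3 n, FreeGroup.lift (LF n i j k) r = 1 := by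
  rintro r ((⟨a, rfl⟩ | ⟨a, b, hcard, rfl⟩) |
    ⟨p, q, u, v, hp1, hpn, hq1, hqn, hu1, hun, hv1, hvn, hpq, hpu, hpv, hqu, hqv, huv, rfl⟩)
  · rw [map_mul, FreeGroup.lift_apply_of, LF_sq]
  · rw [map_mul, map_mul, map_mul, map_inv, map_inv, FreeGroup.lift_apply_of, FreeGroup.lift_apply_of,
      LF_comm hij hik hjk a b hcard]
    group
  · have hok1 : T3ok n (sort3 p q u) := sort3_ok hp1 hq1 hu1 hpn hqn hun hpq hpu hqu
    have hok2 : T3ok n (sort3 p q v) := sort3_ok hp1 hq1 hv1 hpn hqn hvn hpq hpv hqv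
    have hok3 : T3ok n (sort3 p u v) := sort3_ok hp1 hu1 hv1 hpn hun hvn hpu hpv huv
    have hok4 : T3ok n (sort3 q u v) := sort3_ok hq1 hu1 hv1 hqn hun hvn hqu hqv huv
    have eA : fgen3 n p q u = FreeGroup.of (⟨sort3 p q u, hok1⟩ : TIdx n) := by
      rw [fgen3, dif_pos hok1]
    have eB : fgen3 n p q v = FreeGroup.of (⟨sort3 p q v, hok2⟩ : TIdx n) := by
      rw [fgen3, dif_pos hok2]
    have eC : fgen3 n p u v = FreeGroup.of (⟨sort3 p u v, hok3⟩ : TIdx n) := by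
      rw [fgen3, dif_pos hok3]
    have eD : fgen3 n q u v = FreeGroup.of (⟨sort3 q u v, hok4⟩ : TIdx n) := by
      rw [fgen3, dif_pos hok4]
    rw [eA, eB, eC, eD]
    simp only [map_mul, map_inv, FreeGroup.lift_apply_of]
    rw [LF_tetra hij hik hjk hpq hpu hpv hqu hqv huv _ _ _ _ (sort3_tripSet hok1)
      (sort3_tripSet hok2) (sort3_tripSet hok3) (sort3_tripSet hok4)]
    group

/-- Recursive computation of the invariant along a word, keeping track of the count vector. -/
def Waux (n i j k : ℕ) : (Finset ℕ → ZMod 2) → List (TIdx n) → F3 n i j k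
  | _, [] => 1
  | N, g :: γ =>
    (if tripSet g = ({i, j, k} : Finset ℕ) then PresentedGroup.of (deltaF n i j k N) else 1)
      * Waux n i j k (N + eF g) γ

theorem Waux_shift {n i j k : ℕ} (γ : List (TIdx n)) :
    ∀ N M : Finset ℕ → ZMod 2,
      Waux n i j k (N + M) γ = shiftF (deltaF n i j k M) (Waux n i j k N γ) := by
  induction γ with
  | nil => intro N M; simp [Waux]
  | cons g γ IH =>
    intro N M
    simp only [Waux]
    rw [map_mul]
    congr 1
    · by_cases h : tripSet g = ({i, j, k} : Finset ℕ)
      · rw [if_pos h, if_pos h, deltaF_add, shiftF_of, add_comm]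
      · rw [if_neg h, if_neg h, map_one]
    · rw [show N + M + eF g = N + eF g + M from by abel, IH]

theorem w3_gen {n i j k : ℕ} (γ : List (TIdx n)) : ∀ pre : List (TIdx n),
    ((((γ.zipIdx pre.length).map Prod.swap).filter
        (fun x => decide (tripSet x.2 = ({i, j, k} : Finset ℕ)))).map
      (fun x => (PresentedGroup.of (iC3 i j k ((pre ++ γ).take x.1)) : F3 n i j k))).prod
    = Waux n i j k (EvF pre) γ := by
  induction γ with
  | nil => intro pre; simp [Waux]
  | cons g γ IH =>
    intro pre
    rw [List.zipIdx_cons, List.map_cons, Prod.swap_prod_mk]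
    have hpre : pre ++ g :: γ = (pre ++ [g]) ++ γ := by simp
    have hlen : pre.length + 1 = (pre ++ [g]).length := by simp
    by_cases h : tripSet g = ({i, j, k} : Finset ℕ)
    · rw [List.filter_cons_of_pos (by simpa using h), List.map_cons, List.prod_cons]
      have htake : (pre ++ g :: γ).take pre.length = pre := List.take_left
      rw [htake, iC3_eq, hlen, hpre, IH (pre ++ [g]), EvF_append, EvF_singleton]
      simp only [Waux]
      rw [if_pos h]
    · rw [List.filter_cons_of_neg (by simpa using h)]
      rw [hlen, hpre, IH (pre ++ [g]), EvF_append, EvF_singleton]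
      simp only [Waux]
      rw [if_neg h, one_mul]

theorem w3_eq_Waux {n i j k : ℕ} (β : List (TIdx n)) : w3 i j k β = Waux n i j k 0 β := by
  have h := w3_gen (i := i) (j := j) (k := k) β []
  simp only [List.length_nil, List.nil_append, EvF_nil] at h
  rw [← h]
  rfl

/-- The homomorphism from `G3` recording counts and the invariant. -/
def bigPhi {n i j k : ℕ} (hij : i ≠ j) (hik : i ≠ k) (hjk : j ≠ k) : G3 n →* HH n i j k :=
  PresentedGroup.toGroup (LF_rels hij hik hjk)

theorem bigPhi_toG3 {n i j k : ℕ} (hij : i ≠ j) (hik : i ≠ k) (hjk : j ≠ k)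
    (γ : List (TIdx n)) :
    bigPhi hij hik hjk (toG3 γ)
      = ⟨Waux n i j k 0 γ, Multiplicative.ofAdd (EvF γ)⟩ := by
  induction γ with
  | nil =>
    rw [show toG3 ([] : List (TIdx n)) = 1 from rfl, map_one]
    refine SemidirectProduct.ext ?_ ?_
    · exact SemidirectProduct.one_left
    · rw [SemidirectProduct.one_right, EvF_nil, ofAdd_zero]
  | cons g γ IH =>
    rw [show toG3 (g :: γ) = PresentedGroup.of g * toG3 γ from by
        simp [toG3], map_mul, IH]
    have hof : bigPhi hij hik hjk (PresentedGroup.of g) = LF n i j k g :=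
      PresentedGroup.toGroup.of _
    rw [hof]
    refine SemidirectProduct.ext ?_ ?_
    · rw [SemidirectProduct.mul_left]
      show (LF n i j k g).left
          * (phiA n i j k (Multiplicative.ofAdd (eF g))) (Waux n i j k 0 γ)
        = Waux n i j k 0 (g :: γ)
      rw [phiA_apply, toAdd_ofAdd, ← Waux_shift γ 0 (eF g)]
      simp only [Waux, LF_left]
      rw [deltaF_zero]
    · rw [SemidirectProduct.mul_right]
      show Multiplicative.ofAdd (eF g) * Multiplicative.ofAdd (EvF γ)
        = Multiplicative.ofAdd (EvF (g :: γ))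
      rw [EvF_cons, ofAdd_add]

end WellDef5


theorem statement_6 (n i j k : ℕ) (hn : 4 ≤ n)
    (hi : 1 ≤ i ∧ i ≤ n) (hj : 1 ≤ j ∧ j ≤ n) (hk : 1 ≤ k ∧ k ≤ n)
    (hij : i ≠ j) (hik : i ≠ k) (hjk : j ≠ k)
    (β β' : List (TIdx n)) (hg : good3 β) (hg' : good3 β')
    (h : toG3 β = toG3 β') :
    w3 i j k β = w3 i j k β' := by
  have hΦ : bigPhi hij hik hjk (toG3 β) = bigPhi hij hik hjk (toG3 β') := congrArg _ h
  rw [bigPhi_toG3 hij hik hjk β, bigPhi_toG3 hij hik hjk β'] at hΦ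
  have hleft := congrArg SemidirectProduct.left hΦ
  rw [w3_eq_Waux, w3_eq_Waux]
  exact hleft

end GnkBrunnian
end
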